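/- arXiv:1305.2970 — 4 statements merged into one kernel-verified Lean document; each statement's English description precedes it below -/
import Mathlib

section
/- Suppose the primal problem (4.1) is feasible, the dual problem (4.2) has an interior point (i.e., there exists λ⁰ ∈ ℝ^m with c(λ⁰) in the interior of P_A(K)), ℝ[x]_A is K-full, and I(h)+Q(g) is archimedean. Let b^k be the optimal value of the k-th dual relaxation (4.4) and b_max the optimal value of (4.2). Then b^k ≤ b_max for all k and b^k → b_max as k → ∞. -/
open MeasureTheory MvPolynomial Finset

noncomputable section

/-- Exponent vectors `α ∈ ℕ^n`. -/
abbrev Exp (n : ℕ) := Fin n → ℕ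

/-- Evaluation of the monomial `x^α` at a point `u ∈ ℝ^n`. -/
def monoEval {n : ℕ} (α : Exp n) (u : Fin n → ℝ) : ℝ := ∏ i, u i ^ α i

/-- A polynomial in `ℝ[x]_A` is identified with its coefficient vector `p : A → ℝ`;
this is its evaluation at `u`. -/
def evalA {n : ℕ} (A : Finset (Exp n)) (p : A → ℝ) (u : Fin n → ℝ) : ℝ :=
  ∑ α : A, p α * monoEval (α : Exp n) u

/-- The pairing `⟨p, y⟩ = ∑_{α ∈ A} p_α y_α` between `ℝ[x]_A` and `ℝ^A`. -/
def pairA {n : ℕ} (A : Finset (Exp n)) (p y : A → ℝ) : ℝ :=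
  ∑ α : A, p α * y α

/-- The cone `P_A(K)` of polynomials in `ℝ[x]_A` nonnegative on `K`. -/
def PAcone {n : ℕ} (A : Finset (Exp n)) (K : Set (Fin n → ℝ)) : Set (A → ℝ) :=
  {p | ∀ u ∈ K, 0 ≤ evalA A p u}

/-- The cone `R_A(K)` of A-truncated moment sequences admitting a representing
(positive Borel) measure supported in `K`. -/
def RAcone {n : ℕ} (A : Finset (Exp n)) (K : Set (Fin n → ℝ)) : Set (A → ℝ) :=
  {y | ∃ μ : Measure (Fin n → ℝ), μ Kᶜ = 0 ∧
        ∀ α : A, Integrable (monoEval (α : Exp n)) μ ∧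
                 y α = ∫ u, monoEval (α : Exp n) u ∂μ}

/-- `ℝ[x]_A` is `K`-full: some `p ∈ ℝ[x]_A` is strictly positive on `K`. -/
def KFull {n : ℕ} (A : Finset (Exp n)) (K : Set (Fin n → ℝ)) : Prop :=
  ∃ p : A → ℝ, ∀ u ∈ K, 0 < evalA A p u

/-- The semialgebraic set `K = {x : h(x) = 0, g(x) ≥ 0}`. -/
def semiK {n m1 m2 : ℕ} (h : Fin m1 → MvPolynomial (Fin n) ℝ)
    (g : Fin m2 → MvPolynomial (Fin n) ℝ) : Set (Fin n → ℝ) :=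
  {x | (∀ i, eval x (h i) = 0) ∧ (∀ j, 0 ≤ eval x (g j))}

/-- `I_{2k}(h) = h_1 ℝ[x]_{2k - deg h_1} + ⋯ + h_{m1} ℝ[x]_{2k - deg h_{m1}}`. -/
def IhSet {n m1 : ℕ} (h : Fin m1 → MvPolynomial (Fin n) ℝ) (k : ℕ) :
    Set (MvPolynomial (Fin n) ℝ) :=
  {p | ∃ q : Fin m1 → MvPolynomial (Fin n) ℝ,
        (∀ i, q i = 0 ∨ (h i).totalDegree + (q i).totalDegree ≤ 2 * k) ∧
        p = ∑ i, h i * q i}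

/-- `Q_k(g) = Σ_{n,2k} + g_1 Σ_{n,2k-deg g_1} + ⋯ + g_{m2} Σ_{n,2k-deg g_{m2}}`. -/
def QgSet {n m2 : ℕ} (g : Fin m2 → MvPolynomial (Fin n) ℝ) (k : ℕ) :
    Set (MvPolynomial (Fin n) ℝ) :=
  {p | ∃ σ₀ : MvPolynomial (Fin n) ℝ, ∃ σ : Fin m2 → MvPolynomial (Fin n) ℝ,
        IsSumSq σ₀ ∧ σ₀.totalDegree ≤ 2 * k ∧
        (∀ j, IsSumSq (σ j) ∧ (σ j = 0 ∨ (g j).totalDegree + (σ j).totalDegree ≤ 2 * k)) ∧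
        p = σ₀ + ∑ j, g j * σ j}

/-- The truncated preordering `I_{2k}(h) + Q_k(g)`. -/
def IQSet {n m1 m2 : ℕ} (h : Fin m1 → MvPolynomial (Fin n) ℝ)
    (g : Fin m2 → MvPolynomial (Fin n) ℝ) (k : ℕ) : Set (MvPolynomial (Fin n) ℝ) :=
  {p | ∃ a ∈ IhSet h k, ∃ b ∈ QgSet g k, p = a + b}

/-- `I(h) + Q(g)` is archimedean: `R - ‖x‖² ∈ I_{2k}(h) + Q_k(g)` for some `R > 0` and `k`. -/
def ArchQM {n m1 m2 : ℕ} (h : Fin m1 → MvPolynomial (Fin n) ℝ)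
    (g : Fin m2 → MvPolynomial (Fin n) ℝ) : Prop :=
  ∃ R : ℝ, 0 < R ∧ ∃ k : ℕ, (C R - ∑ i : Fin n, X i ^ 2) ∈ IQSet h g k

/-- The Riesz functional `L_z(p) = ∑_α p_α z_α` of a (truncated) moment sequence `z`. -/
def riesz {n : ℕ} (z : Exp n → ℝ) (p : MvPolynomial (Fin n) ℝ) : ℝ :=
  ∑ α ∈ p.support, coeff α p * z α

/-- `Φ_k(g)`: all localizing matrices `L_{g_j}^{(k)}(z) ⪰ 0` for `j = 0,1,…,m2`
(with `g_0 = 1`), expressed via the quadratic forms `L_z(g_j p²) ≥ 0`. -/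
def PhiSet {n m2 : ℕ} (g : Fin m2 → MvPolynomial (Fin n) ℝ) (k : ℕ) : Set (Exp n → ℝ) :=
  {z | (∀ p : MvPolynomial (Fin n) ℝ, (p ^ 2).totalDegree ≤ 2 * k → 0 ≤ riesz z (p ^ 2)) ∧
       (∀ j, ∀ p : MvPolynomial (Fin n) ℝ,
          (g j * p ^ 2).totalDegree ≤ 2 * k → 0 ≤ riesz z (g j * p ^ 2))}

/-- `E_k(h)`: all localizing matrices `L_{h_i}^{(k)}(z) = 0`, expressed via the
vanishing of the quadratic forms `L_z(h_i p²)`. -/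
def ESet {n m1 : ℕ} (h : Fin m1 → MvPolynomial (Fin n) ℝ) (k : ℕ) : Set (Exp n → ℝ) :=
  {z | ∀ i, ∀ p : MvPolynomial (Fin n) ℝ,
        (h i * p ^ 2).totalDegree ≤ 2 * k → riesz z (h i * p ^ 2) = 0}

/-- Restriction `z|_A` of a moment sequence to the indices in `A`. -/
def restrA {n : ℕ} (A : Finset (Exp n)) (z : Exp n → ℝ) : A → ℝ := fun α => z α

/-- `deg(A) = max { |α| : α ∈ A }`. -/
def degA {n : ℕ} (A : Finset (Exp n)) : ℕ := A.sup fun α => ∑ i, α i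

/-- The polynomial `∑_{α ∈ A} p_α x^α` associated to a coefficient vector `p : A → ℝ`. -/
def toPoly {n : ℕ} (A : Finset (Exp n)) (p : A → ℝ) : MvPolynomial (Fin n) ℝ :=
  ∑ α : A, monomial (Finsupp.equivFunOnFinite.symm (α : Exp n)) (p α)

/-- `c(λ) = c - λ_1 a_1 - ⋯ - λ_m a_m` (as coefficient vectors in `ℝ[x]_A`). -/
def cLam {n m : ℕ} {A : Finset (Exp n)} (c : A → ℝ) (a : Fin m → (A → ℝ))
    (lam : Fin m → ℝ) : A → ℝ :=
  c - ∑ i, lam i • a i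

/-- Feasibility of `w` for the `k`-th primal relaxation (4.3). -/
def RelaxFeas {n m1 m2 m : ℕ} (h : Fin m1 → MvPolynomial (Fin n) ℝ)
    (g : Fin m2 → MvPolynomial (Fin n) ℝ) (A : Finset (Exp n))
    (a : Fin m → (A → ℝ)) (b : Fin m → ℝ) (k : ℕ) (w : Exp n → ℝ) : Prop :=
  w ∈ PhiSet g k ∩ ESet h k ∧ ∀ i, pairA A (a i) (restrA A w) = b i

/-- `w` is a minimizer of the `k`-th primal relaxation (4.3). -/
def RelaxMin {n m1 m2 m : ℕ} (h : Fin m1 → MvPolynomial (Fin n) ℝ)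
    (g : Fin m2 → MvPolynomial (Fin n) ℝ) (A : Finset (Exp n)) (c : A → ℝ)
    (a : Fin m → (A → ℝ)) (b : Fin m → ℝ) (k : ℕ) (w : Exp n → ℝ) : Prop :=
  RelaxFeas h g A a b k w ∧
  ∀ w' : Exp n → ℝ, RelaxFeas h g A a b k w' →
    pairA A c (restrA A w) ≤ pairA A c (restrA A w')

/-- The exponents `α ∈ ℕ^n` with `|α| ≤ r`, as a finite set. -/
def expSet (n r : ℕ) : Finset (Exp n) :=
  (Fintype.piFinset fun _ : Fin n => Finset.range (r + 1)).filter fun α => ∑ i, α i ≤ r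

/-- The `r`-th order moment matrix `M_r(z)`, with rows and columns indexed by
exponents of degree `≤ r` and entries `z_{α+β}`. -/
def momMat {n : ℕ} (z : Exp n → ℝ) (r : ℕ) :
    Matrix (expSet n r) (expSet n r) ℝ :=
  fun α β => z ((α : Exp n) + (β : Exp n))

/-- The degree bound `d_K = max{1, ⌈deg h_i / 2⌉, ⌈deg g_j / 2⌉}`. -/
def dKnum {n m1 m2 : ℕ} (h : Fin m1 → MvPolynomial (Fin n) ℝ)
    (g : Fin m2 → MvPolynomial (Fin n) ℝ) : ℕ :=
  max 1 (max (Finset.univ.sup fun i => ((h i).totalDegree + 1) / 2)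
             (Finset.univ.sup fun j => ((g j).totalDegree + 1) / 2))

/-- The truncation `z|_{2t}` is flat: the localizing conditions hold at order `t`
and `rank M_{t - d_K}(z) = rank M_t(z)`. -/
def IsFlat {n m1 m2 : ℕ} (h : Fin m1 → MvPolynomial (Fin n) ℝ)
    (g : Fin m2 → MvPolynomial (Fin n) ℝ) (t : ℕ) (z : Exp n → ℝ) : Prop :=
  z ∈ PhiSet g t ∩ ESet h t ∧
  (momMat z (t - dKnum h g)).rank = (momMat z t).rank

/-- `u` is a KKT point of `min f(x) s.t. h(x) = 0, g(x) ≥ 0`. -/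
def IsKKT {n m1 m2 : ℕ} (h : Fin m1 → MvPolynomial (Fin n) ℝ)
    (g : Fin m2 → MvPolynomial (Fin n) ℝ) (f : MvPolynomial (Fin n) ℝ)
    (u : Fin n → ℝ) : Prop :=
  u ∈ semiK h g ∧ ∃ μ : Fin m1 → ℝ, ∃ ν : Fin m2 → ℝ,
    (∀ j, 0 ≤ ν j) ∧ (∀ j, ν j * eval u (g j) = 0) ∧
    ∀ l : Fin n, eval u (pderiv l f) =
      ∑ i, μ i * eval u (pderiv l (h i)) + ∑ j, ν j * eval u (pderiv l (g j))


namespace Nie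
variable {n m1 m2 : ℕ} {h : Fin m1 → MvPolynomial (Fin n) ℝ} {g : Fin m2 → MvPolynomial (Fin n) ℝ}

lemma isSumSq_one : IsSumSq (1 : MvPolynomial (Fin n) ℝ) := by
  have h1 : (1 : MvPolynomial (Fin n) ℝ) = 1*1 + 0 := by ring
  rw [h1]; exact IsSumSq.sq_add 1 IsSumSq.zero

lemma isSumSq_sqMul (s : MvPolynomial (Fin n) ℝ) {τ : MvPolynomial (Fin n) ℝ}
    (ht : IsSumSq τ) : IsSumSq (s^2 * τ) := by
  induction ht with
  | zero => simpa using IsSumSq.zero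
  | @sq_add a S pS ih =>
      have h1 : s^2 * (a*a + S) = (s*a)*(s*a) + s^2 * S := by ring
      rw [h1]; exact IsSumSq.sq_add _ ih

lemma isSumSq_C {t : ℝ} (ht : 0 ≤ t) : IsSumSq (C t : MvPolynomial (Fin n) ℝ) := by
  have h1 : (C t : MvPolynomial (Fin n) ℝ) = C (Real.sqrt t) * C (Real.sqrt t) + 0 := by
    rw [← C_mul, Real.mul_self_sqrt ht, add_zero]
  rw [h1]; exact IsSumSq.sq_add _ IsSumSq.zero

lemma isSumSq_eval_nonneg {τ : MvPolynomial (Fin n) ℝ} (ht : IsSumSq τ) (u : Fin n → ℝ) :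
    0 ≤ eval u τ := by
  induction ht with
  | zero => simp
  | @sq_add a S pS ih => rw [map_add, map_mul]; nlinarith [sq_nonneg (eval u a)]

lemma degCond_add {d k : ℕ} {q q' : MvPolynomial (Fin n) ℝ}
    (h1 : q = 0 ∨ d + q.totalDegree ≤ k) (h2 : q' = 0 ∨ d + q'.totalDegree ≤ k) :
    q + q' = 0 ∨ d + (q+q').totalDegree ≤ k := by
  rcases h1 with rfl | h1
  · simpa using h2
  rcases h2 with rfl | h2
  · simpa using Or.inr h1
  · right
    calc d + (q+q').totalDegree ≤ d + max q.totalDegree q'.totalDegree :=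
          Nat.add_le_add_left (totalDegree_add q q') d
      _ ≤ k := by omega

lemma IQSet_mono {k k' : ℕ} (hkk : k ≤ k') : IQSet h g k ⊆ IQSet h g k' := by
  rintro p ⟨a, ⟨q, hq, rfl⟩, b, ⟨σ₀, σ, hσ₀, hd₀, hσ, rfl⟩, rfl⟩
  refine ⟨_, ⟨q, fun i => ?_, rfl⟩, _, ⟨σ₀, σ, hσ₀, hd₀.trans (by omega), fun j => ⟨(hσ j).1, ?_⟩, rfl⟩, rfl⟩
  · rcases hq i with h1 | h1
    · exact Or.inl h1
    · exact Or.inr (h1.trans (by omega))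
  · rcases (hσ j).2 with h1 | h1
    · exact Or.inl h1
    · exact Or.inr (h1.trans (by omega))

lemma IQSet_add {p p' : MvPolynomial (Fin n) ℝ} {k k' : ℕ}
    (hp : p ∈ IQSet h g k) (hp' : p' ∈ IQSet h g k') :
    p + p' ∈ IQSet h g (max k k') := by
  replace hp := IQSet_mono (le_max_left k k') hp
  replace hp' := IQSet_mono (le_max_right k k') hp'
  set K := max k k'
  obtain ⟨a, ⟨q, hq, rfl⟩, b, ⟨σ₀, σ, hσ₀, hd₀, hσ, rfl⟩, rfl⟩ := hp
  obtain ⟨a', ⟨q', hq', rfl⟩, b', ⟨σ₀', σ', hσ₀', hd₀', hσ', rfl⟩, rfl⟩ := hp'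
  refine ⟨∑ i, h i * (q i + q' i), ⟨fun i => q i + q' i, fun i => degCond_add (hq i) (hq' i), rfl⟩,
    (σ₀ + σ₀') + ∑ j, g j * (σ j + σ' j),
    ⟨σ₀ + σ₀', fun j => σ j + σ' j, hσ₀.add hσ₀',
      (totalDegree_add _ _).trans (by omega),
      fun j => ⟨(hσ j).1.add (hσ' j).1, degCond_add (hσ j).2 (hσ' j).2⟩, rfl⟩, ?_⟩
  simp only [mul_add, Finset.sum_add_distrib]
  ring

lemma IQSet_sqMul {p : MvPolynomial (Fin n) ℝ} {k : ℕ} (s : MvPolynomial (Fin n) ℝ)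
    (hp : p ∈ IQSet h g k) : s^2 * p ∈ IQSet h g (k + s.totalDegree) := by
  obtain ⟨a, ⟨q, hq, rfl⟩, b, ⟨σ₀, σ, hσ₀, hd₀, hσ, rfl⟩, rfl⟩ := hp
  have hds : (s^2).totalDegree ≤ 2 * s.totalDegree := by
    simpa [two_mul] using (totalDegree_pow s 2).trans (by omega)
  have degmul : ∀ τ : MvPolynomial (Fin n) ℝ, (s^2 * τ).totalDegree ≤ 2 * s.totalDegree + τ.totalDegree :=
    fun τ => (totalDegree_mul _ _).trans (by omega)
  have hcond : ∀ (d : ℕ) (τ : MvPolynomial (Fin n) ℝ), (τ = 0 ∨ d + τ.totalDegree ≤ 2 * k) →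
      (s^2 * τ = 0 ∨ d + (s^2*τ).totalDegree ≤ 2 * (k + s.totalDegree)) := by
    intro d τ hτ
    rcases hτ with rfl | hτ
    · left; ring
    · right
      have := degmul τ
      omega
  refine ⟨∑ i, h i * (s^2 * q i), ⟨fun i => s^2 * q i, fun i => hcond _ _ (hq i), rfl⟩,
    s^2 * σ₀ + ∑ j, g j * (s^2 * σ j),
    ⟨s^2 * σ₀, fun j => s^2 * σ j, isSumSq_sqMul s hσ₀, (degmul σ₀).trans (by omega),
      fun j => ⟨isSumSq_sqMul s (hσ j).1, hcond _ _ (hσ j).2⟩, rfl⟩, ?_⟩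
  have h1 : ∑ i, h i * (s^2 * q i) = s^2 * ∑ i, h i * q i := by
    rw [Finset.mul_sum]; exact Finset.sum_congr rfl fun i _ => by ring
  have h2 : ∑ j, g j * (s^2 * σ j) = s^2 * ∑ j, g j * σ j := by
    rw [Finset.mul_sum]; exact Finset.sum_congr rfl fun j _ => by ring
  rw [h1, h2]; ring

lemma IQSet_one : (1 : MvPolynomial (Fin n) ℝ) ∈ IQSet h g 0 := by
  refine ⟨0, ⟨fun _ => 0, fun i => Or.inl rfl, by simp⟩,
    1, ⟨1, fun _ => 0, isSumSq_one, by simp, fun j => ⟨IsSumSq.zero, Or.inl rfl⟩, by simp⟩, by simp⟩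

structure IsQM (Q : Set (MvPolynomial (Fin n) ℝ)) : Prop where
  add_mem : ∀ {a b : MvPolynomial (Fin n) ℝ}, a ∈ Q → b ∈ Q → a + b ∈ Q
  sq_mul_mem : ∀ (s : MvPolynomial (Fin n) ℝ) {a}, a ∈ Q → s^2 * a ∈ Q
  one_mem : (1 : MvPolynomial (Fin n) ℝ) ∈ Q

namespace IsQM
variable {Q : Set (MvPolynomial (Fin n) ℝ)}

lemma sq_mem (hQ : IsQM Q) (s : MvPolynomial (Fin n) ℝ) : s^2 ∈ Q := by
  simpa using hQ.sq_mul_mem s hQ.one_mem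

lemma zero_mem (hQ : IsQM Q) : (0 : MvPolynomial (Fin n) ℝ) ∈ Q := by
  have := hQ.sq_mul_mem 0 hQ.one_mem
  simpa using this

lemma cmul_mem (hQ : IsQM Q) {t : ℝ} (ht : 0 ≤ t) {a : MvPolynomial (Fin n) ℝ} (ha : a ∈ Q) :
    C t * a ∈ Q := by
  have h1 : (C t : MvPolynomial (Fin n) ℝ) = (C (Real.sqrt t))^2 := by
    rw [← C_pow, Real.sq_sqrt ht]
  rw [h1]; exact hQ.sq_mul_mem _ ha

lemma const_mem (hQ : IsQM Q) {t : ℝ} (ht : 0 ≤ t) : (C t : MvPolynomial (Fin n) ℝ) ∈ Q := by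
  simpa using hQ.cmul_mem ht hQ.one_mem

lemma sos_mul_mem (hQ : IsQM Q) {s : MvPolynomial (Fin n) ℝ} (hs : IsSumSq s)
    {a : MvPolynomial (Fin n) ℝ} (ha : a ∈ Q) : s * a ∈ Q := by
  induction hs with
  | zero => simpa using hQ.zero_mem
  | @sq_add b S pS ih =>
      have h1 : (b*b + S) * a = b^2 * a + S * a := by ring
      rw [h1]; exact hQ.add_mem (hQ.sq_mul_mem b ha) ih

lemma sos_mem (hQ : IsQM Q) {s : MvPolynomial (Fin n) ℝ} (hs : IsSumSq s) : s ∈ Q := by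
  simpa using hQ.sos_mul_mem hs hQ.one_mem

lemma neg_one_of_neg_const (hQ : IsQM Q) {t : ℝ} (ht : t < 0)
    (hmem : (C t : MvPolynomial (Fin n) ℝ) ∈ Q) : (-1 : MvPolynomial (Fin n) ℝ) ∈ Q := by
  have htne : t ≠ 0 := ne_of_lt ht
  have h1 : (-1 : MvPolynomial (Fin n) ℝ) = C (-t)⁻¹ * C t := by
    rw [← C_mul, inv_neg, neg_mul, inv_mul_cancel₀ htne]
    simp
  rw [h1]
  exact hQ.cmul_mem (inv_nonneg.mpr (by linarith)) hmem

lemma univ_of_neg_one (hQ : IsQM Q) (hneg : (-1 : MvPolynomial (Fin n) ℝ) ∈ Q)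
    (p : MvPolynomial (Fin n) ℝ) : p ∈ Q := by
  have h2 : (C (2⁻¹:ℝ) : MvPolynomial (Fin n) ℝ) * C (2⁻¹:ℝ) * 4 = 1 := by
    rw [show (4 : MvPolynomial (Fin n) ℝ) = C (4:ℝ) from (map_ofNat C 4).symm, ← C_mul, ← C_mul]
    norm_num
  have key : p = (C (2⁻¹:ℝ) * (p+1))^2 * 1 + (C (2⁻¹:ℝ) * (p-1))^2 * (-1) := by
    linear_combination (-p) * h2
  rw [key]; exact hQ.add_mem (hQ.sq_mul_mem _ hQ.one_mem) (hQ.sq_mul_mem _ hneg)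

lemma mul_mem_of_add_const (hQ : IsQM Q) {A B : MvPolynomial (Fin n) ℝ} {c : ℝ}
    (hA : A ∈ Q) (hB : B ∈ Q) (hAB : A + B = C c) (hc : 0 < c) : A * B ∈ Q := by
  have key : A * B = C c⁻¹ * (B^2 * A + A^2 * B) := by
    have h1 : B^2 * A + A^2 * B = A * B * (A + B) := by ring
    rw [h1, hAB, ← mul_assoc, mul_comm (C c⁻¹), mul_assoc, ← C_mul,
      inv_mul_cancel₀ (ne_of_gt hc)]
    simp
  rw [key]
  exact hQ.cmul_mem (by positivity) (hQ.add_mem (hQ.sq_mul_mem B hA) (hQ.sq_mul_mem A hB))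

end IsQM

/-- The full quadratic module generated by the relaxation hierarchy. -/
def Mset (h : Fin m1 → MvPolynomial (Fin n) ℝ) (g : Fin m2 → MvPolynomial (Fin n) ℝ) :
    Set (MvPolynomial (Fin n) ℝ) := {p | ∃ k, p ∈ IQSet h g k}

lemma isQM_Mset (h : Fin m1 → MvPolynomial (Fin n) ℝ) (g : Fin m2 → MvPolynomial (Fin n) ℝ) :
    IsQM (Mset h g) := by
  constructor
  · rintro a b ⟨k, hk⟩ ⟨k', hk'⟩
    exact ⟨max k k', IQSet_add hk hk'⟩
  · rintro s a ⟨k, hk⟩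
    exact ⟨k + s.totalDegree, IQSet_sqMul s hk⟩
  · exact ⟨0, IQSet_one⟩

lemma Mset_g_mem (j : Fin m2) : g j ∈ Mset h g := by
  refine ⟨(g j).totalDegree, 0, ⟨fun _ => 0, fun i => Or.inl rfl, by simp⟩,
    g j, ⟨0, fun j' => if j' = j then 1 else 0, IsSumSq.zero, by simp, fun j' => ?_, ?_⟩, by simp⟩
  · dsimp only
    by_cases hj : j' = j
    · subst hj
      rw [if_pos rfl]
      exact ⟨isSumSq_one, Or.inr (by simp [totalDegree_one, two_mul])⟩
    · rw [if_neg hj]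
      exact ⟨IsSumSq.zero, Or.inl rfl⟩
  · simp only [mul_ite, mul_one, mul_zero]
    rw [Finset.sum_ite_eq' Finset.univ j (fun j' => g j')]
    simp

lemma Mset_h_mem (c : ℝ) (i : Fin m1) : C c * h i ∈ Mset h g := by
  refine ⟨(h i).totalDegree, C c * h i, ⟨fun i' => if i' = i then C c else 0, fun i' => ?_, ?_⟩,
    0, ⟨0, fun _ => 0, IsSumSq.zero, by simp, fun j => ⟨IsSumSq.zero, Or.inl rfl⟩, by simp⟩, by simp⟩
  · dsimp only
    by_cases hi : i' = i
    · subst hi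
      rw [if_pos rfl]
      refine Or.inr ?_
      rw [totalDegree_C]
      omega
    · rw [if_neg hi]
      exact Or.inl rfl
  · simp only [mul_ite, mul_zero]
    rw [Finset.sum_ite_eq' Finset.univ i (fun i' => h i' * C c)]
    simp [mul_comm]

lemma Mset_eval_nonneg {p : MvPolynomial (Fin n) ℝ} (hp : p ∈ Mset h g)
    {u : Fin n → ℝ} (hu : u ∈ semiK h g) : 0 ≤ eval u p := by
  obtain ⟨k, a, ⟨q, hq, rfl⟩, b, ⟨σ₀, σ, hσ₀, hd₀, hσ, rfl⟩, rfl⟩ := hp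
  rw [map_add]
  have h1 : eval u (∑ i, h i * q i) = 0 := by
    rw [map_sum]
    refine Finset.sum_eq_zero fun i _ => ?_
    rw [map_mul, hu.1 i, zero_mul]
  have h2 : 0 ≤ eval u (σ₀ + ∑ j, g j * σ j) := by
    rw [map_add, map_sum]
    have h3 : 0 ≤ ∑ j, eval u (g j * σ j) := by
      refine Finset.sum_nonneg fun j _ => ?_
      rw [map_mul]
      exact mul_nonneg (hu.2 j) (isSumSq_eval_nonneg (hσ j).1 u)
    have h4 := isSumSq_eval_nonneg hσ₀ u
    linarith
  linarith

/-- archimedean boundedness -/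
def Bdd (h : Fin m1 → MvPolynomial (Fin n) ℝ) (g : Fin m2 → MvPolynomial (Fin n) ℝ)
    (p : MvPolynomial (Fin n) ℝ) : Prop :=
  ∃ N : ℝ, (C N - p) ∈ Mset h g ∧ (C N + p) ∈ Mset h g

lemma Mset_const_sub_mono {N N' : ℝ} {p : MvPolynomial (Fin n) ℝ}
    (hmem : C N - p ∈ Mset h g) (hNN : N ≤ N') : C N' - p ∈ Mset h g := by
  have h1 : C N' - p = C (N' - N) + (C N - p) := by rw [C_sub]; ring
  rw [h1]
  exact (isQM_Mset h g).add_mem ((isQM_Mset h g).const_mem (by linarith)) hmem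

lemma bdd_of_pair {N : ℝ} {p : MvPolynomial (Fin n) ℝ}
    (h1 : C N - p ∈ Mset h g) (h2 : C N + p ∈ Mset h g) : Bdd h g p := ⟨N, h1, h2⟩

lemma Bdd.up {p : MvPolynomial (Fin n) ℝ} (hp : Bdd h g p) :
    ∃ N : ℝ, 1 ≤ N ∧ (C N - p) ∈ Mset h g ∧ (C N + p) ∈ Mset h g := by
  obtain ⟨N, h1, h2⟩ := hp
  refine ⟨max N 1, le_max_right N 1, Mset_const_sub_mono h1 (le_max_left N 1), ?_⟩
  have h3 : C (max N 1) + p = C (max N 1) - (-p) := by ring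
  have h4 : C N + p = C N - (-p) := by ring
  rw [h3]
  exact Mset_const_sub_mono (h4 ▸ h2) (le_max_left N 1)

lemma Bdd.neg {p : MvPolynomial (Fin n) ℝ} (hp : Bdd h g p) : Bdd h g (-p) := by
  obtain ⟨N, h1, h2⟩ := hp
  exact ⟨N, by rw [sub_neg_eq_add]; exact h2, by rw [← sub_eq_add_neg]; exact h1⟩

lemma Bdd.add {p q : MvPolynomial (Fin n) ℝ} (hp : Bdd h g p) (hq : Bdd h g q) :
    Bdd h g (p + q) := by
  obtain ⟨N, h1, h2⟩ := hp
  obtain ⟨N', h1', h2'⟩ := hq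
  refine ⟨N + N', ?_, ?_⟩
  · have e : C (N + N') - (p + q) = (C N - p) + (C N' - q) := by rw [C_add]; ring
    rw [e]; exact (isQM_Mset h g).add_mem h1 h1'
  · have e : C (N + N') + (p + q) = (C N + p) + (C N' + q) := by rw [C_add]; ring
    rw [e]; exact (isQM_Mset h g).add_mem h2 h2'

lemma Bdd.cmul_nonneg {p : MvPolynomial (Fin n) ℝ} {t : ℝ} (ht : 0 ≤ t) (hp : Bdd h g p) :
    Bdd h g (C t * p) := by
  obtain ⟨N, h1, h2⟩ := hp
  refine ⟨t * N, ?_, ?_⟩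
  · have e : C (t * N) - C t * p = C t * (C N - p) := by rw [C_mul]; ring
    rw [e]; exact (isQM_Mset h g).cmul_mem ht h1
  · have e : C (t * N) + C t * p = C t * (C N + p) := by rw [C_mul]; ring
    rw [e]; exact (isQM_Mset h g).cmul_mem ht h2

lemma Bdd.cmul {p : MvPolynomial (Fin n) ℝ} (t : ℝ) (hp : Bdd h g p) : Bdd h g (C t * p) := by
  rcases le_or_gt 0 t with ht | ht
  · exact Bdd.cmul_nonneg ht hp
  · have hneg : Bdd h g (C (-t) * (-p)) := Bdd.cmul_nonneg (by linarith) (Bdd.neg hp)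
    have e : C t * p = C (-t) * (-p) := by rw [map_neg]; ring
    rw [e]; exact hneg

lemma Bdd.sq {p : MvPolynomial (Fin n) ℝ} (hp : Bdd h g p) : Bdd h g (p^2) := by
  obtain ⟨N, hN1, h1, h2⟩ := hp.up
  have hsum : (C N - p) + (C N + p) = C (2*N) := by
    rw [C_mul, show (C (2:ℝ) : MvPolynomial (Fin n) ℝ) = 2 from map_ofNat C 2]; ring
  have hprod : (C N - p) * (C N + p) ∈ Mset h g :=
    (isQM_Mset h g).mul_mem_of_add_const h1 h2 hsum (by linarith)
  refine ⟨N^2, ?_, ?_⟩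
  · have e : C (N^2) - p^2 = (C N - p) * (C N + p) := by rw [C_pow]; ring
    rw [e]; exact hprod
  · have e : C (N^2) + p^2 = C (N^2) + p^2 := rfl
    exact (isQM_Mset h g).add_mem ((isQM_Mset h g).const_mem (by positivity))
      ((isQM_Mset h g).sq_mem p)

lemma Bdd.mul {p q : MvPolynomial (Fin n) ℝ} (hp : Bdd h g p) (hq : Bdd h g q) :
    Bdd h g (p * q) := by
  have h4 : (C (4⁻¹:ℝ) : MvPolynomial (Fin n) ℝ) * 4 = 1 := by
    rw [show (4 : MvPolynomial (Fin n) ℝ) = C (4:ℝ) from (map_ofNat C 4).symm, ← C_mul]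
    norm_num
  have key : p * q = C (4⁻¹:ℝ) * ((p+q)^2 + (-((p + -q)^2))) := by
    linear_combination (-(p*q)) * h4
  rw [key]
  exact Bdd.cmul 4⁻¹ (Bdd.add (Bdd.sq (hp.add hq)) (Bdd.neg (Bdd.sq (hp.add hq.neg))))

lemma Bdd.const (t : ℝ) : Bdd h g (C t : MvPolynomial (Fin n) ℝ) := by
  refine ⟨|t|, ?_, ?_⟩
  · have e : (C |t| - C t : MvPolynomial (Fin n) ℝ) = C (|t| - t) := by rw [C_sub]
    rw [e]; exact (isQM_Mset h g).const_mem (by cases abs_cases t <;> linarith)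
  · have e : (C |t| + C t : MvPolynomial (Fin n) ℝ) = C (|t| + t) := by rw [C_add]
    rw [e]; exact (isQM_Mset h g).const_mem (by cases abs_cases t <;> linarith)

lemma Mset_sum_mem {ι : Type*} (s : Finset ι) (f : ι → MvPolynomial (Fin n) ℝ)
    (hf : ∀ i ∈ s, f i ∈ Mset h g) : ∑ i ∈ s, f i ∈ Mset h g := by
  classical
  induction s using Finset.induction_on with
  | empty => simpa using (isQM_Mset h g).zero_mem
  | insert _ _ hni ih =>
      rw [Finset.sum_insert hni]
      exact (isQM_Mset h g).add_mem (hf _ (Finset.mem_insert_self _ _))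
        (ih fun i hi => hf i (Finset.mem_insert_of_mem hi))

lemma bdd_X (harch : ArchQM h g) (i : Fin n) : Bdd h g (X i) := by
  obtain ⟨R, hR, k, hmem⟩ := harch
  have hRX : (C R - X i ^ 2 : MvPolynomial (Fin n) ℝ) ∈ Mset h g := by
    have hsum : (∑ j ∈ Finset.univ.erase i, (X j ^ 2 : MvPolynomial (Fin n) ℝ)) ∈ Mset h g :=
      Mset_sum_mem _ _ (fun j _ => (isQM_Mset h g).sq_mem (X j))
    have e : (C R - X i ^2 : MvPolynomial (Fin n) ℝ)
        = (C R - ∑ j, X j ^2) + ∑ j ∈ Finset.univ.erase i, X j ^2 := by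
      rw [← Finset.add_sum_erase Finset.univ (fun j => (X j : MvPolynomial (Fin n) ℝ) ^2)
        (Finset.mem_univ i)]
      ring
    rw [e]; exact (isQM_Mset h g).add_mem ⟨k, hmem⟩ hsum
  set N : ℝ := R + 1 with hN
  have hN1 : 1 ≤ N := by simp only [hN]; linarith
  have hNR : R ≤ N^2 := by simp only [hN]; nlinarith
  have hNsq : (C (N^2) - X i ^2 : MvPolynomial (Fin n) ℝ) ∈ Mset h g := by
    have e : (C (N^2) - X i ^2 : MvPolynomial (Fin n) ℝ) = C (N^2 - R) + (C R - X i ^2) := by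
      rw [C_sub]; ring
    rw [e]
    exact (isQM_Mset h g).add_mem ((isQM_Mset h g).const_mem (by linarith)) hRX
  have hNne : (2*N : ℝ) ≠ 0 := ne_of_gt (by linarith)
  have h2N : (C ((2*N)⁻¹) : MvPolynomial (Fin n) ℝ) * (2 * C N) = 1 := by
    rw [show (2 : MvPolynomial (Fin n) ℝ) = C (2:ℝ) from (map_ofNat C 2).symm, ← C_mul, ← C_mul,
      inv_mul_cancel₀ hNne, map_one]
  have key : ∀ x : MvPolynomial (Fin n) ℝ, x^2 = X i ^2 → C N + x ∈ Mset h g := by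
    intro x hx
    have e : C N + x = C ((2*N)⁻¹) * ((C N + x)^2 + (C (N^2) - X i ^2)) := by
      rw [← hx, C_pow]
      linear_combination (-(C N + x)) * h2N
    rw [e]
    exact (isQM_Mset h g).cmul_mem (inv_nonneg.mpr (by linarith))
      ((isQM_Mset h g).add_mem ((isQM_Mset h g).sq_mem _) hNsq)
  refine ⟨N, ?_, key (X i) rfl⟩
  rw [sub_eq_add_neg]
  exact key (-X i) (by ring)

lemma bdd_all (harch : ArchQM h g) (p : MvPolynomial (Fin n) ℝ) : Bdd h g p := by
  induction p using MvPolynomial.induction_on with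
  | C a => exact Bdd.const a
  | add p q hp hq => exact hp.add hq
  | mul_X p i hp => exact hp.mul (bdd_X harch i)

lemma exists_maximal_qm (Q₀ : Set (MvPolynomial (Fin n) ℝ)) (hQ₀ : IsQM Q₀)
    (hproper : (-1 : MvPolynomial (Fin n) ℝ) ∉ Q₀) :
    ∃ Q : Set (MvPolynomial (Fin n) ℝ), IsQM Q ∧ Q₀ ⊆ Q ∧ (-1 : MvPolynomial (Fin n) ℝ) ∉ Q ∧
      ∀ Q' : Set (MvPolynomial (Fin n) ℝ), IsQM Q' → Q ⊆ Q' →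
        (-1 : MvPolynomial (Fin n) ℝ) ∉ Q' → Q' = Q := by
  obtain ⟨m, hsub, hmax⟩ := zorn_subset_nonempty
    {Q : Set (MvPolynomial (Fin n) ℝ) | IsQM Q ∧ Q₀ ⊆ Q ∧ (-1 : MvPolynomial (Fin n) ℝ) ∉ Q}
    (fun c hcS hchain hcne => by
      obtain ⟨q0, hq0⟩ := hcne
      refine ⟨⋃₀ c, ⟨⟨?_, ?_, ?_⟩, ?_, ?_⟩, fun s hs => Set.subset_sUnion_of_mem hs⟩
      · rintro a b ⟨qa, hqa, ha⟩ ⟨qb, hqb, hb⟩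
        rcases hchain.total hqa hqb with hab | hab
        · exact ⟨qb, hqb, (hcS hqb).1.add_mem (hab ha) hb⟩
        · exact ⟨qa, hqa, (hcS hqa).1.add_mem ha (hab hb)⟩
      · rintro s a ⟨qa, hqa, ha⟩
        exact ⟨qa, hqa, (hcS hqa).1.sq_mul_mem s ha⟩
      · exact ⟨q0, hq0, (hcS hq0).1.one_mem⟩
      · exact (hcS hq0).2.1.trans (Set.subset_sUnion_of_mem hq0)
      · rintro ⟨q, hq, hmem⟩
        exact (hcS hq).2.2 hmem)
    Q₀ ⟨hQ₀, subset_rfl, hproper⟩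
  refine ⟨m, hmax.1.1, hsub, hmax.1.2.2, fun Q' hQ' hmQ' hQ'proper => ?_⟩
  exact Set.Subset.antisymm (hmax.2 ⟨hQ', hsub.trans hmQ', hQ'proper⟩ hmQ') hmQ'

lemma maximal_qm_total (harch : ArchQM h g) {Q : Set (MvPolynomial (Fin n) ℝ)}
    (hQ : IsQM Q) (hMQ : Mset h g ⊆ Q) (hproper : (-1 : MvPolynomial (Fin n) ℝ) ∉ Q)
    (hmax : ∀ Q' : Set (MvPolynomial (Fin n) ℝ), IsQM Q' → Q ⊆ Q' →
      (-1 : MvPolynomial (Fin n) ℝ) ∉ Q' → Q' = Q)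
    (a : MvPolynomial (Fin n) ℝ) : a ∈ Q ∨ -a ∈ Q := by
  by_contra hcon
  push_neg at hcon
  obtain ⟨ha, hna⟩ := hcon
  have ext : ∀ b : MvPolynomial (Fin n) ℝ, b ∉ Q →
      ∃ q₁ ∈ Q, ∃ s₁, IsSumSq s₁ ∧ (-1 : MvPolynomial (Fin n) ℝ) = q₁ + s₁ * b := by
    intro b hb
    set Q' : Set (MvPolynomial (Fin n) ℝ) := {x | ∃ q ∈ Q, ∃ s, IsSumSq s ∧ x = q + s * b}
      with hQ'def
    have hQ'qm : IsQM Q' := by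
      constructor
      · rintro x y ⟨q, hq, s, hs, rfl⟩ ⟨q', hq', s', hs', rfl⟩
        exact ⟨q + q', hQ.add_mem hq hq', s + s', hs.add hs', by ring⟩
      · rintro t x ⟨q, hq, s, hs, rfl⟩
        exact ⟨t^2 * q, hQ.sq_mul_mem t hq, t^2 * s, isSumSq_sqMul t hs, by ring⟩
      · exact ⟨1, hQ.one_mem, 0, IsSumSq.zero, by ring⟩
    have hQQ' : Q ⊆ Q' := fun q hq => ⟨q, hq, 0, IsSumSq.zero, by ring⟩
    by_cases hneg : (-1 : MvPolynomial (Fin n) ℝ) ∈ Q'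
    · obtain ⟨q₁, hq₁, s₁, hs₁, he⟩ := hneg
      exact ⟨q₁, hq₁, s₁, hs₁, he⟩
    · exfalso
      have heq := hmax Q' hQ'qm hQQ' hneg
      exact hb (heq ▸ ⟨0, hQ.zero_mem, 1, isSumSq_one, by ring⟩)
  obtain ⟨q₁, hq₁, s₁, hs₁, e₁⟩ := ext a ha
  obtain ⟨q₂, hq₂, s₂, hs₂, e₂⟩ := ext (-a) hna
  have h1q₁ : (1 + q₁ : MvPolynomial (Fin n) ℝ) ∈ Q := hQ.add_mem hQ.one_mem hq₁
  have hnegs₁sq : -(s₁^2) ∈ Q := by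
    have e₄ : -(s₁^2) = s₁^2 * q₂ + s₁ * (s₂ * (1 + q₁)) := by
      linear_combination (s₁*s₂) * e₁ + (s₁^2) * e₂
    rw [e₄]
    exact hQ.add_mem (hQ.sq_mul_mem s₁ hq₂) (hQ.sos_mul_mem hs₁ (hQ.sos_mul_mem hs₂ h1q₁))
  obtain ⟨N, hN1, hNm, hNp⟩ := (bdd_all harch a).up
  have t2 : C N * s₁ - 1 ∈ Q := by
    have e : C N * s₁ - 1 = s₁ * (C N + a) + q₁ := by linear_combination e₁
    rw [e]
    exact hQ.add_mem (hQ.sos_mul_mem hs₁ (hMQ hNp)) hq₁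
  have tA : ((C N * s₁ - 1)^2 + (C N)^2 * (-(s₁^2)) : MvPolynomial (Fin n) ℝ) ∈ Q :=
    hQ.add_mem (hQ.sq_mem _) (hQ.sq_mul_mem _ hnegs₁sq)
  have efin : (-1 : MvPolynomial (Fin n) ℝ)
      = ((C N * s₁ - 1)^2 + (C N)^2 * (-(s₁^2))) + ((C N * s₁ - 1) + (C N * s₁ - 1)) := by
    ring
  exact hproper (efin ▸ hQ.add_mem tA (hQ.add_mem t2 t2))

/-- A maximal proper quadratic module above `Mset h g`. -/
structure GoodQM (h : Fin m1 → MvPolynomial (Fin n) ℝ) (g : Fin m2 → MvPolynomial (Fin n) ℝ)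
    (Q : Set (MvPolynomial (Fin n) ℝ)) : Prop where
  qm : IsQM Q
  sup : Mset h g ⊆ Q
  proper : (-1 : MvPolynomial (Fin n) ℝ) ∉ Q
  total : ∀ p : MvPolynomial (Fin n) ℝ, p ∈ Q ∨ -p ∈ Q
  arch : ArchQM h g

def cutSet (Q : Set (MvPolynomial (Fin n) ℝ)) (p : MvPolynomial (Fin n) ℝ) : Set ℝ :=
  {r : ℝ | C r - p ∈ Q}

def cutFn (Q : Set (MvPolynomial (Fin n) ℝ)) (p : MvPolynomial (Fin n) ℝ) : ℝ :=
  sInf (cutSet Q p)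

section Cut
variable {Q : Set (MvPolynomial (Fin n) ℝ)}

lemma cut_nonempty (hG : GoodQM h g Q) (p : MvPolynomial (Fin n) ℝ) : (cutSet Q p).Nonempty := by
  obtain ⟨N, h1, _⟩ := bdd_all hG.arch p
  exact ⟨N, hG.sup h1⟩

lemma neg_const_notmem (hG : GoodQM h g Q) {t : ℝ} (ht : t < 0) :
    (C t : MvPolynomial (Fin n) ℝ) ∉ Q :=
  fun hmem => hG.proper (hG.qm.neg_one_of_neg_const ht hmem)

lemma cut_bddBelow (hG : GoodQM h g Q) (p : MvPolynomial (Fin n) ℝ) : BddBelow (cutSet Q p) := by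
  obtain ⟨N, _, h2⟩ := bdd_all hG.arch p
  refine ⟨-N, fun r hr => ?_⟩
  by_contra hc
  push_neg at hc
  have hmem : (C (r + N) : MvPolynomial (Fin n) ℝ) ∈ Q := by
    have e : (C (r + N) : MvPolynomial (Fin n) ℝ) = (C r - p) + (C N + p) := by
      rw [C_add]; ring
    rw [e]; exact hG.qm.add_mem hr (hG.sup h2)
  exact neg_const_notmem hG (by linarith) hmem

lemma cut_upward (hG : GoodQM h g Q) {p : MvPolynomial (Fin n) ℝ} {r r' : ℝ}
    (hr : r ∈ cutSet Q p) (hrr : r ≤ r') : r' ∈ cutSet Q p := by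
  have e : (C r' - p : MvPolynomial (Fin n) ℝ) = C (r' - r) + (C r - p) := by
    rw [C_sub]; ring
  show C r' - p ∈ Q
  rw [e]
  exact hG.qm.add_mem (hG.qm.const_mem (by linarith)) hr

lemma cut_mem_of_lt (hG : GoodQM h g Q) {p : MvPolynomial (Fin n) ℝ} {r : ℝ}
    (hr : cutFn Q p < r) : r ∈ cutSet Q p := by
  obtain ⟨r', hr', hlt⟩ := exists_lt_of_csInf_lt (cut_nonempty hG p) hr
  exact cut_upward hG hr' (le_of_lt hlt)

lemma cut_le_of_mem (hG : GoodQM h g Q) {p : MvPolynomial (Fin n) ℝ} {r : ℝ}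
    (hr : r ∈ cutSet Q p) : cutFn Q p ≤ r := csInf_le (cut_bddBelow hG p) hr

lemma cut_total (hG : GoodQM h g Q) {p : MvPolynomial (Fin n) ℝ} {r : ℝ}
    (hr : r < cutFn Q p) : p - C r ∈ Q := by
  have hnot : C r - p ∉ Q := fun hmem => absurd (cut_le_of_mem hG hmem) (by linarith)
  rcases hG.total (C r - p) with hmem | hmem
  · exact absurd hmem hnot
  · have e : p - C r = -(C r - p) := by ring
    rw [e]; exact hmem

lemma cut_nonneg (hG : GoodQM h g Q) {p : MvPolynomial (Fin n) ℝ} (hp : p ∈ Q) :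
    0 ≤ cutFn Q p := by
  by_contra hc
  push_neg at hc
  have hr : cutFn Q p < cutFn Q p / 2 := by linarith
  have hmem := cut_mem_of_lt hG hr
  have hCr : (C (cutFn Q p / 2) : MvPolynomial (Fin n) ℝ) ∈ Q := by
    have e : (C (cutFn Q p / 2) : MvPolynomial (Fin n) ℝ) = (C (cutFn Q p / 2) - p) + p := by ring
    rw [e]; exact hG.qm.add_mem hmem hp
  exact neg_const_notmem hG (by linarith) hCr

lemma cut_const (hG : GoodQM h g Q) (t : ℝ) : cutFn Q (C t) = t := by
  refine le_antisymm (cut_le_of_mem hG (by show C t - C t ∈ Q; rw [sub_self]; exact hG.qm.zero_mem))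
    (le_csInf (cut_nonempty hG _) fun r hr => ?_)
  by_contra hc
  push_neg at hc
  have e : (C r - C t : MvPolynomial (Fin n) ℝ) = C (r - t) := by rw [C_sub]
  exact neg_const_notmem hG (show r - t < 0 by linarith) (e ▸ hr)

lemma cut_add (hG : GoodQM h g Q) (p q : MvPolynomial (Fin n) ℝ) :
    cutFn Q (p + q) = cutFn Q p + cutFn Q q := by
  refine le_antisymm (le_of_forall_pos_le_add fun ε hε => ?_) ?_
  · have hp : C (cutFn Q p + ε/2) - p ∈ Q := cut_mem_of_lt hG (by linarith)
    have hq : C (cutFn Q q + ε/2) - q ∈ Q := cut_mem_of_lt hG (by linarith)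
    have hmem : C ((cutFn Q p + ε/2) + (cutFn Q q + ε/2)) - (p + q) ∈ Q := by
      have e : C ((cutFn Q p + ε/2) + (cutFn Q q + ε/2)) - (p + q)
          = (C (cutFn Q p + ε/2) - p) + (C (cutFn Q q + ε/2) - q) := by
        rw [C_add]; ring
      rw [e]; exact hG.qm.add_mem hp hq
    have hle := cut_le_of_mem hG hmem
    linarith
  · by_contra hc
    push_neg at hc
    set δ : ℝ := (cutFn Q p + cutFn Q q - cutFn Q (p+q)) / 4 with hδ
    have hδpos : 0 < δ := by simp only [hδ]; linarith
    have h1 : p - C (cutFn Q p - δ) ∈ Q := cut_total hG (by linarith)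
    have h2 : q - C (cutFn Q q - δ) ∈ Q := cut_total hG (by linarith)
    have h3 : C (cutFn Q (p+q) + δ) - (p + q) ∈ Q := cut_mem_of_lt hG (by linarith)
    have hmem : (C (cutFn Q (p+q) + δ - (cutFn Q p - δ) - (cutFn Q q - δ))
        : MvPolynomial (Fin n) ℝ) ∈ Q := by
      have e : (C (cutFn Q (p+q) + δ - (cutFn Q p - δ) - (cutFn Q q - δ))
          : MvPolynomial (Fin n) ℝ)
          = (p - C (cutFn Q p - δ)) + (q - C (cutFn Q q - δ))
            + (C (cutFn Q (p+q) + δ) - (p + q)) := by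
        simp only [C_sub, C_add]; ring
      rw [e]; exact hG.qm.add_mem (hG.qm.add_mem h1 h2) h3
    refine neg_const_notmem hG ?_ hmem
    simp only [hδ]; linarith

lemma cut_zero (hG : GoodQM h g Q) : cutFn Q 0 = 0 := by
  have := cut_const hG 0
  rwa [map_zero] at this

lemma cut_neg (hG : GoodQM h g Q) (p : MvPolynomial (Fin n) ℝ) : cutFn Q (-p) = - cutFn Q p := by
  have h1 := cut_add hG p (-p)
  rw [add_neg_cancel, cut_zero hG] at h1
  linarith

lemma cut_cmul_le (hG : GoodQM h g Q) {t : ℝ} (ht : 0 < t) (p : MvPolynomial (Fin n) ℝ) :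
    cutFn Q (C t * p) ≤ t * cutFn Q p := by
  have key : ∀ ε > (0:ℝ), cutFn Q (C t * p) ≤ t * (cutFn Q p + ε) := by
    intro ε hε
    have hmem : C (t * (cutFn Q p + ε)) - C t * p ∈ Q := by
      have e : C (t * (cutFn Q p + ε)) - C t * p = C t * (C (cutFn Q p + ε) - p) := by
        rw [C_mul]; ring
      rw [e]; exact hG.qm.cmul_mem (le_of_lt ht) (cut_mem_of_lt hG (by linarith))
    exact cut_le_of_mem hG hmem
  by_contra hc
  push_neg at hc
  have hε : 0 < (cutFn Q (C t * p) - t * cutFn Q p) / (2*t) :=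
    div_pos (by linarith) (by linarith)
  have := key _ hε
  have h2 : t * ((cutFn Q (C t * p) - t * cutFn Q p) / (2*t)) =
      (cutFn Q (C t * p) - t * cutFn Q p) / 2 := by field_simp
  nlinarith

lemma cut_cmul_pos (hG : GoodQM h g Q) {t : ℝ} (ht : 0 < t) (p : MvPolynomial (Fin n) ℝ) :
    cutFn Q (C t * p) = t * cutFn Q p := by
  refine le_antisymm (cut_cmul_le hG ht p) ?_
  have h1 := cut_cmul_le hG (inv_pos.mpr ht) (C t * p)
  have e : C t⁻¹ * (C t * p) = p := by
    rw [← mul_assoc, ← C_mul, inv_mul_cancel₀ (ne_of_gt ht), map_one, one_mul]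
  rw [e] at h1
  have h2 : t * cutFn Q p ≤ t * (t⁻¹ * cutFn Q (C t * p)) :=
    mul_le_mul_of_nonneg_left h1 (le_of_lt ht)
  rwa [← mul_assoc, mul_inv_cancel₀ (ne_of_gt ht), one_mul] at h2

lemma cut_cmul (hG : GoodQM h g Q) (t : ℝ) (p : MvPolynomial (Fin n) ℝ) :
    cutFn Q (C t * p) = t * cutFn Q p := by
  rcases lt_trichotomy t 0 with ht | rfl | ht
  · have e : C t * p = C (-t) * (-p) := by rw [map_neg]; ring
    rw [e, cut_cmul_pos hG (by linarith) (-p), cut_neg hG]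
    ring
  · rw [map_zero, zero_mul, cut_zero hG, zero_mul]
  · exact cut_cmul_pos hG ht p

lemma sq_le_of_forall_abs_lt {x y : ℝ} (hf : ∀ r : ℝ, |x| < r → y ≤ r^2) : y ≤ x^2 := by
  by_contra hc
  push_neg at hc
  have hx2 : (0:ℝ) ≤ x^2 := sq_nonneg x
  set r : ℝ := Real.sqrt ((x^2 + y)/2) with hr
  have hr2 : r^2 = (x^2 + y)/2 := Real.sq_sqrt (by nlinarith)
  have habs : |x| < r := by
    have h1 : Real.sqrt (x^2) < Real.sqrt ((x^2 + y)/2) :=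
      Real.sqrt_lt_sqrt (sq_nonneg x) (by nlinarith)
    rwa [Real.sqrt_sq_eq_abs] at h1
  have := hf r habs
  nlinarith

lemma cut_sq (hG : GoodQM h g Q) (p : MvPolynomial (Fin n) ℝ) :
    cutFn Q (p^2) = (cutFn Q p)^2 := by
  refine le_antisymm ?_ ?_
  · refine sq_le_of_forall_abs_lt fun r hr => ?_
    have hr0 : 0 < r := lt_of_le_of_lt (abs_nonneg _) hr
    have hA : C r - p ∈ Q := cut_mem_of_lt hG (lt_of_le_of_lt (le_abs_self _) hr)
    have hB : C r + p ∈ Q := by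
      have h1 : cutFn Q (-p) < r := by
        rw [cut_neg hG]
        have := neg_abs_le (cutFn Q p)
        linarith [neg_le_abs (cutFn Q p), hr]
      have h2 := cut_mem_of_lt hG h1
      have e : C r + p = C r - (-p) := by ring
      rw [e]; exact h2
    have hsum : (C r - p) + (C r + p) = C (2*r) := by
      rw [C_mul, show (C (2:ℝ) : MvPolynomial (Fin n) ℝ) = 2 from map_ofNat C 2]; ring
    have hprod := hG.qm.mul_mem_of_add_const hA hB hsum (by linarith)
    have e : (C r - p) * (C r + p) = C (r^2) - p^2 := by rw [C_pow]; ring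
    rw [e] at hprod
    exact cut_le_of_mem hG hprod
  · have key : 0 ≤ cutFn Q ((p - C (cutFn Q p))^2) := cut_nonneg hG (hG.qm.sq_mem _)
    have e : (p - C (cutFn Q p))^2 = p^2 + (C (-(2 * cutFn Q p)) * p + C ((cutFn Q p)^2)) := by
      rw [map_neg, C_mul, C_pow, show (C (2:ℝ) : MvPolynomial (Fin n) ℝ) = 2 from map_ofNat C 2]
      ring
    rw [e, cut_add hG, cut_add hG, cut_cmul hG, cut_const hG] at key
    nlinarith

lemma cut_mul (hG : GoodQM h g Q) (p q : MvPolynomial (Fin n) ℝ) :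
    cutFn Q (p * q) = cutFn Q p * cutFn Q q := by
  have e : C (4:ℝ) * (p * q) = (p+q)^2 + (-((p + -q)^2)) := by
    rw [show (C (4:ℝ) : MvPolynomial (Fin n) ℝ) = 4 from map_ofNat C 4]; ring
  have h1 := congrArg (cutFn Q) e
  rw [cut_cmul hG, cut_add hG, cut_sq hG, cut_neg hG, cut_sq hG, cut_add hG, cut_add hG,
    cut_neg hG] at h1
  nlinarith [h1]

lemma cut_one (hG : GoodQM h g Q) : cutFn Q 1 = 1 := by
  have := cut_const hG 1
  rwa [map_one] at this

lemma cut_eval (hG : GoodQM h g Q) (p : MvPolynomial (Fin n) ℝ) :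
    cutFn Q p = eval (fun i => cutFn Q (X i)) p := by
  induction p using MvPolynomial.induction_on with
  | C a => rw [cut_const hG, eval_C]
  | add p q hp hq => rw [cut_add hG, map_add, hp, hq]
  | mul_X p i hp => rw [cut_mul hG, map_mul, hp, eval_X]

end Cut

theorem putinar (harch : ArchQM h g) (f : MvPolynomial (Fin n) ℝ)
    (hf : ∀ u ∈ semiK h g, 0 < eval u f) : f ∈ Mset h g := by
  by_cases himp : (-1 : MvPolynomial (Fin n) ℝ) ∈ Mset h g
  · exact (isQM_Mset h g).univ_of_neg_one himp f
  set T : Set ℝ := {t : ℝ | f - C t ∈ Mset h g} with hT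
  obtain ⟨N', hm', hp'⟩ := bdd_all harch f
  have hTne : (-N' : ℝ) ∈ T := by
    show f - C (-N') ∈ Mset h g
    have e : f - C (-N') = C N' + f := by rw [map_neg]; ring
    rw [e]; exact hp'
  have hTbdd : BddAbove T := by
    refine ⟨N', fun t ht => ?_⟩
    by_contra hc; push_neg at hc
    have hmem : (C (N' - t) : MvPolynomial (Fin n) ℝ) ∈ Mset h g := by
      have e : (C (N' - t) : MvPolynomial (Fin n) ℝ) = (C N' - f) + (f - C t) := by
        rw [C_sub]; ring
      rw [e]; exact (isQM_Mset h g).add_mem hm' ht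
    exact himp ((isQM_Mset h g).neg_one_of_neg_const (by linarith) hmem)
  set m₀ : ℝ := sSup T with hm₀
  have hup : ∀ δ : ℝ, 0 < δ → f - C (m₀ - δ) ∈ Mset h g := by
    intro δ hδ
    obtain ⟨t, htT, hlt⟩ := exists_lt_of_lt_csSup ⟨_, hTne⟩ (show m₀ - δ < m₀ by linarith)
    have e : f - C (m₀ - δ) = (f - C t) + C (t - (m₀ - δ)) := by simp only [C_sub]; ring
    rw [e]; exact (isQM_Mset h g).add_mem htT ((isQM_Mset h g).const_mem (by linarith))
  have hnotup : ∀ δ : ℝ, 0 < δ → f - C (m₀ + δ) ∉ Mset h g := by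
    intro δ hδ hmem
    have hle : m₀ + δ ≤ m₀ := le_csSup hTbdd hmem
    linarith
  rcases lt_or_ge 0 m₀ with hpos | hneg
  · have hmem := hup m₀ hpos
    rw [sub_self, map_zero, sub_zero] at hmem
    exact hmem
  · exfalso
    set gg : MvPolynomial (Fin n) ℝ := f - C m₀ with hgg
    set Q₀ : Set (MvPolynomial (Fin n) ℝ) :=
      {x | ∃ q ∈ Mset h g, ∃ s, IsSumSq s ∧ x = q + s * (-gg)} with hQ₀
    have hQ₀qm : IsQM Q₀ := by
      constructor
      · rintro x y ⟨q, hq, s, hs, rfl⟩ ⟨q', hq', s', hs', rfl⟩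
        exact ⟨q + q', (isQM_Mset h g).add_mem hq hq', s + s', hs.add hs', by ring⟩
      · rintro t x ⟨q, hq, s, hs, rfl⟩
        exact ⟨t^2 * q, (isQM_Mset h g).sq_mul_mem t hq, t^2 * s, isSumSq_sqMul t hs, by ring⟩
      · exact ⟨1, (isQM_Mset h g).one_mem, 0, IsSumSq.zero, by ring⟩
    have hMQ₀ : Mset h g ⊆ Q₀ := fun q hq => ⟨q, hq, 0, IsSumSq.zero, by ring⟩
    by_cases hneg1 : (-1 : MvPolynomial (Fin n) ℝ) ∈ Q₀
    · -- the improper case is impossible: the λ-trick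
      obtain ⟨mm, hmm, s, hs, he⟩ := hneg1
      have e : s * gg = 1 + mm := by linear_combination he
      obtain ⟨c₁, hc₁1, hc₁m, _⟩ := (bdd_all harch s).up
      obtain ⟨c₂, hc₂1, hc₂m, _⟩ := (bdd_all harch (s * mm)).up
      set lam : ℝ := (c₁ + c₂ + 1)⁻¹ with hlamdef
      have hlampos : 0 < lam := inv_pos.mpr (by linarith)
      have hlamden : lam * (c₁ + c₂ + 1) = 1 := inv_mul_cancel₀ (by positivity)
      have hlam1 : lam ≤ 1 := by nlinarith
      obtain ⟨c₃, hc₃1, hc₃m, _⟩ := (bdd_all harch ((1 - C lam * s)^2)).up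
      set δ : ℝ := lam / (2 * (c₃ + 1)) with hδdef
      have hδpos : 0 < δ := by
        rw [hδdef]; exact div_pos hlampos (by linarith)
      have hδden : δ * (2 * (c₃ + 1)) = lam := by
        rw [hδdef]; field_simp
      set κ : ℝ := 2*lam - δ*c₃ - lam^2*c₁ - lam^2*c₂ - lam/2 with hκdef
      have hκ0 : 0 ≤ κ := by
        rw [hκdef]
        nlinarith [sq_nonneg lam, hlamden, hδden, hδpos, hlampos]
      have hgδ : gg + C δ ∈ Mset h g := by
        have e2 : gg + C δ = f - C (m₀ - δ) := by rw [C_sub, hgg]; ring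
        rw [e2]; exact hup δ hδpos
      have w₁ : (1 - C lam * s)^2 * (gg + C δ) ∈ Mset h g :=
        (isQM_Mset h g).sq_mul_mem _ hgδ
      have w₂ : C δ * (C c₃ - (1 - C lam * s)^2) ∈ Mset h g :=
        (isQM_Mset h g).cmul_mem (le_of_lt hδpos) hc₃m
      have w₃ : C lam * mm + C lam * mm ∈ Mset h g :=
        (isQM_Mset h g).add_mem ((isQM_Mset h g).cmul_mem (le_of_lt hlampos) hmm)
          ((isQM_Mset h g).cmul_mem (le_of_lt hlampos) hmm)
      have w₄ : C lam ^ 2 * (C c₁ - s) ∈ Mset h g := (isQM_Mset h g).sq_mul_mem _ hc₁m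
      have w₅ : C lam ^ 2 * (C c₂ - s * mm) ∈ Mset h g := (isQM_Mset h g).sq_mul_mem _ hc₂m
      have w₆ : (C κ : MvPolynomial (Fin n) ℝ) ∈ Mset h g := (isQM_Mset h g).const_mem hκ0
      have hCκ : (C κ : MvPolynomial (Fin n) ℝ)
          = C lam + C lam - C δ * C c₃ - C lam ^ 2 * C c₁ - C lam ^ 2 * C c₂ - C (lam/2) := by
        rw [hκdef, show 2*lam - δ*c₃ - lam^2*c₁ - lam^2*c₂ - lam/2
          = (lam + lam) - δ*c₃ - lam^2*c₁ - lam^2*c₂ - lam/2 from by ring]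
        simp only [C_sub, C_add, C_mul, C_pow]
      have key : gg - C (lam/2)
          = (1 - C lam * s)^2 * (gg + C δ) + C δ * (C c₃ - (1 - C lam * s)^2)
            + (C lam * mm + C lam * mm) + C lam ^ 2 * (C c₁ - s) + C lam ^ 2 * (C c₂ - s * mm)
            + C κ := by
        rw [hCκ]
        linear_combination (2 * C lam - C lam^2 * s) * e
      have hfin : gg - C (lam/2) ∈ Mset h g := by
        rw [key]
        exact (isQM_Mset h g).add_mem ((isQM_Mset h g).add_mem ((isQM_Mset h g).add_mem
          ((isQM_Mset h g).add_mem ((isQM_Mset h g).add_mem w₁ w₂) w₃) w₄) w₅) w₆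
      have e3 : gg - C (lam/2) = f - C (m₀ + lam/2) := by rw [C_add, hgg]; ring
      rw [e3] at hfin
      exact hnotup (lam/2) (by linarith) hfin
    · -- proper case: build a character
      obtain ⟨Qm, hQmqm, hQ₀Qm, hQmproper, hQmmax⟩ := exists_maximal_qm Q₀ hQ₀qm hneg1
      have hMQm : Mset h g ⊆ Qm := hMQ₀.trans hQ₀Qm
      have htot := maximal_qm_total harch hQmqm hMQm hQmproper hQmmax
      have hG : GoodQM h g Qm := ⟨hQmqm, hMQm, hQmproper, htot, harch⟩
      set u : Fin n → ℝ := fun i => cutFn Qm (X i) with hu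
      have hHzero : ∀ i : Fin m1, cutFn Qm (h i) = 0 := by
        intro i
        have h1 : 0 ≤ cutFn Qm (h i) := by
          have hmem := Mset_h_mem (h := h) (g := g) 1 i
          rw [map_one, one_mul] at hmem
          exact cut_nonneg hG (hMQm hmem)
        have h2 : 0 ≤ cutFn Qm (-(h i)) := by
          have hmem := Mset_h_mem (h := h) (g := g) (-1) i
          have e4 : (C (-1:ℝ) : MvPolynomial (Fin n) ℝ) * h i = -(h i) := by
            simp
          rw [e4] at hmem
          exact cut_nonneg hG (hMQm hmem)
        rw [cut_neg hG] at h2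
        linarith
      have hsemiK : u ∈ semiK h g := by
        constructor
        · intro i
          rw [← cut_eval hG (h i)]
          exact hHzero i
        · intro j
          rw [← cut_eval hG (g j)]
          exact cut_nonneg hG (hMQm (Mset_g_mem j))
      have hggQm : -gg ∈ Qm := hQ₀Qm ⟨0, (isQM_Mset h g).zero_mem, 1, isSumSq_one, by ring⟩
      have hggle : cutFn Qm gg ≤ 0 := by
        have h1 : 0 ≤ cutFn Qm (-gg) := cut_nonneg hG hggQm
        rw [cut_neg hG] at h1
        linarith
      have hfeval : eval u f ≤ m₀ := by
        have e5 : f = gg + C m₀ := by rw [hgg]; ring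
        have h6 : cutFn Qm f = cutFn Qm gg + m₀ := by
          rw [e5, cut_add hG, cut_const hG]
        have h7 := cut_eval hG f
        rw [← h7, h6]
        linarith
      have := hf u hsemiK
      linarith

lemma eval_toPoly {A : Finset (Exp n)} (p : A → ℝ) (u : Fin n → ℝ) :
    eval u (toPoly A p) = evalA A p u := by
  unfold toPoly evalA
  rw [map_sum]
  refine Finset.sum_congr rfl fun α _ => ?_
  rw [eval_monomial, Finsupp.prod_pow]
  simp [monoEval]

lemma evalA_sub_smul {A : Finset (Exp n)} (p q : A → ℝ) (t : ℝ) (u : Fin n → ℝ) :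
    evalA A (p - t • q) u = evalA A p u - t * evalA A q u := by
  unfold evalA
  rw [Finset.mul_sum, ← Finset.sum_sub_distrib]
  refine Finset.sum_congr rfl fun α _ => ?_
  simp only [Pi.sub_apply, Pi.smul_apply, smul_eq_mul]
  ring

lemma interior_pos {A : Finset (Exp n)} {K : Set (Fin n → ℝ)}
    (hfull : KFull A K) {p₀ : A → ℝ} (hp₀ : p₀ ∈ interior (PAcone A K)) :
    ∀ u ∈ K, 0 < evalA A p₀ u := by
  intro u hu
  rcases hfull with ⟨q, hq⟩
  rcases lt_or_ge 0 (evalA A p₀ u) with hlt | hle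
  · exact hlt
  have h0' : 0 ≤ evalA A p₀ u := interior_subset hp₀ u hu
  have heq : evalA A p₀ u = 0 := le_antisymm hle h0'
  have hcont : Continuous (fun t : ℝ => p₀ - t • q) := by continuity
  have hten : Filter.Tendsto (fun t : ℝ => p₀ - t • q) (nhds 0) (nhds p₀) := by
    have h00 : p₀ - (0:ℝ) • q = p₀ := by simp
    simpa [h00] using hcont.tendsto 0
  have hev : ∀ᶠ t : ℝ in nhds 0, p₀ - t • q ∈ interior (PAcone A K) :=
    hten.eventually (isOpen_interior.eventually_mem hp₀)
  obtain ⟨εb, hεb, hball⟩ := Metric.eventually_nhds_iff.mp hev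
  have hmem : p₀ - (εb/2) • q ∈ interior (PAcone A K) := by
    refine hball ?_
    rw [Real.dist_eq, sub_zero, abs_of_pos (by linarith)]
    linarith
  have hle2 : 0 ≤ evalA A (p₀ - (εb/2) • q) u := interior_subset hmem u hu
  rw [evalA_sub_smul, heq] at hle2
  have := hq u hu
  nlinarith

end Nie

/-- Under feasibility of (4.1), an interior point of (4.2),
`K`-fullness and archimedeanness, the optimal values `b^k` of the dual relaxations
(4.4) satisfy `b^k ≤ b_max` for all `k` and `b^k → b_max`. -/
theorem statement_10 {n m1 m2 m : ℕ} (hn : 1 ≤ n)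
    (h : Fin m1 → MvPolynomial (Fin n) ℝ) (g : Fin m2 → MvPolynomial (Fin n) ℝ)
    {A : Finset (Exp n)} (hA : A.Nonempty)
    (c : A → ℝ) (a : Fin m → (A → ℝ)) (b : Fin m → ℝ)
    (hfeas : ∃ y ∈ RAcone A (semiK h g), ∀ i, pairA A (a i) y = b i)
    (hint : ∃ lam0 : Fin m → ℝ, cLam c a lam0 ∈ interior (PAcone A (semiK h g)))
    (hfull : KFull A (semiK h g)) (harch : ArchQM h g)
    (bmax : ℝ)
    (hbmax : IsLUB {t : ℝ | ∃ lam : Fin m → ℝ,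
        cLam c a lam ∈ PAcone A (semiK h g) ∧ t = ∑ i, b i * lam i} bmax) :
    (∀ k : ℕ, ∀ lam : Fin m → ℝ, toPoly A (cLam c a lam) ∈ IQSet h g k →
        ∑ i, b i * lam i ≤ bmax) ∧
    ∀ ε : ℝ, 0 < ε → ∃ N : ℕ, ∀ k : ℕ, N ≤ k →
      ∃ lam : Fin m → ℝ, toPoly A (cLam c a lam) ∈ IQSet h g k ∧
        bmax - ε ≤ ∑ i, b i * lam i := by
  classical
  constructor
  · -- weak duality: every relaxation value is at most bmax
    intro k lam hmem
    refine hbmax.1 ⟨lam, fun u hu => ?_, rfl⟩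
    rw [← Nie.eval_toPoly]
    exact Nie.Mset_eval_nonneg ⟨k, hmem⟩ hu
  · -- asymptotic convergence
    intro ε hε
    -- a near-optimal dual feasible point
    have hexists : ∃ t ∈ {t : ℝ | ∃ lam : Fin m → ℝ,
        cLam c a lam ∈ PAcone A (semiK h g) ∧ t = ∑ i, b i * lam i}, bmax - ε/2 < t := by
      by_contra hc
      push_neg at hc
      have hub : bmax ≤ bmax - ε/2 := hbmax.2 (fun t ht => hc t ht)
      linarith
    obtain ⟨tval, ⟨lamstar, hlamstarP, htval⟩, htgt⟩ := hexists
    rw [htval] at htgt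
    obtain ⟨lam0, hlam0⟩ := hint
    have hpos0 : ∀ u ∈ semiK h g, 0 < evalA A (cLam c a lam0) u :=
      Nie.interior_pos hfull hlam0
    set D : ℝ := (∑ i, b i * lam0 i) - (∑ i, b i * lamstar i) with hD
    set t : ℝ := min 1 ((ε/2) / (1 + |D|)) with ht
    have ht0 : 0 < t := lt_min one_pos (div_pos (by linarith) (by positivity))
    have ht1 : t ≤ 1 := min_le_left _ _
    set lamt : Fin m → ℝ := fun i => lamstar i + t * (lam0 i - lamstar i) with hlamt
    -- the combination identity for cLam
    have hcomb : cLam c a lamt = fun α => (1-t) * cLam c a lamstar α + t * cLam c a lam0 α := by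
      funext α
      simp only [cLam, Pi.sub_apply, Finset.sum_apply, Pi.smul_apply, smul_eq_mul, hlamt]
      have hin : ∑ i, (lamstar i + t * (lam0 i - lamstar i)) * a i α
          = ∑ i, lamstar i * a i α + t * (∑ i, lam0 i * a i α - ∑ i, lamstar i * a i α) := by
        rw [Finset.sum_congr rfl (fun i _ => show (lamstar i + t * (lam0 i - lamstar i)) * a i α
          = lamstar i * a i α + t * (lam0 i * a i α - lamstar i * a i α) from by ring),
          Finset.sum_add_distrib, ← Finset.mul_sum, Finset.sum_sub_distrib]
      rw [hin]
      ring
    have hevalcomb : ∀ u : Fin n → ℝ, evalA A (cLam c a lamt) u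
        = (1-t) * evalA A (cLam c a lamstar) u + t * evalA A (cLam c a lam0) u := by
      intro u
      rw [hcomb]
      unfold evalA
      rw [Finset.mul_sum, Finset.mul_sum, ← Finset.sum_add_distrib]
      refine Finset.sum_congr rfl fun α _ => ?_
      ring
    have hposc : ∀ u ∈ semiK h g, 0 < eval u (toPoly A (cLam c a lamt)) := by
      intro u hu
      rw [Nie.eval_toPoly, hevalcomb]
      have h1 : 0 ≤ evalA A (cLam c a lamstar) u := hlamstarP u hu
      have h2 := hpos0 u hu
      nlinarith
    obtain ⟨k₀, hk₀⟩ := Nie.putinar harch (toPoly A (cLam c a lamt)) hposc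
    -- numeric bound
    have hsum : ∑ i, b i * lamt i = (∑ i, b i * lamstar i) + t * D := by
      simp only [hlamt, hD]
      rw [Finset.sum_congr rfl (fun i _ => show b i * (lamstar i + t * (lam0 i - lamstar i))
        = b i * lamstar i + t * (b i * lam0 i - b i * lamstar i) from by ring),
        Finset.sum_add_distrib, ← Finset.mul_sum, Finset.sum_sub_distrib]
    have habs : t * |D| ≤ ε/2 := by
      have h1 : t ≤ (ε/2) / (1 + |D|) := min_le_right _ _
      have h2 : (0:ℝ) ≤ |D| := abs_nonneg D
      have h3 : (ε/2) / (1 + |D|) * (1 + |D|) = ε/2 := div_mul_cancel₀ _ (by positivity)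
      nlinarith [mul_le_mul_of_nonneg_right h1 h2]
    clear_value D t lamt
    have htD : -(ε/2) ≤ t * D := by
      have h4 : |t * D| = t * |D| := by rw [abs_mul, abs_of_nonneg (le_of_lt ht0)]
      have h5 := neg_abs_le (t * D)
      rw [h4] at h5
      linarith
    refine ⟨k₀, fun k hk => ⟨lamt, Nie.IQSet_mono hk hk₀, ?_⟩⟩
    rw [hsum]
    linarith

end
end

section
/- Let K ⊆ ℝ^n be a nonempty compact set, let A ⊆ ℕ^n be finite, and let c, a_1, …, a_m ∈ ℝ[x]_A. Suppose there is no nonzero a ∈ span{a_1,…,a_m} with a ≥ 0 on K. If there is no λ ∈ ℝ^m with c − λ_1 a_1 − ⋯ − λ_m a_m ∈ P_A(K), then there exists y ∈ R_A(K) with ⟨c, y⟩ < 0 and ⟨a_i, y⟩ = 0 for all i = 1,…,m. -/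
open MeasureTheory MvPolynomial Finset

noncomputable section

namespace Stmt16

variable {n : ℕ} {A : Finset (Exp n)}

lemma pairA_zero_right (p : A → ℝ) : pairA A p 0 = 0 := by simp [pairA]

lemma pairA_add_right (p y z : A → ℝ) : pairA A p (y + z) = pairA A p y + pairA A p z := by
  simp [pairA, mul_add, Finset.sum_add_distrib]

lemma pairA_smul_right (l : ℝ) (p y : A → ℝ) : pairA A p (l • y) = l * pairA A p y := by
  simp [pairA, Finset.mul_sum, mul_left_comm]

lemma pairA_add_left (p q y : A → ℝ) : pairA A (p + q) y = pairA A p y + pairA A q y := by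
  simp [pairA, add_mul, Finset.sum_add_distrib]

lemma pairA_sum_smul_left {ι : Type*} [Fintype ι] (κ : ι → ℝ) (w : ι → (A → ℝ)) (y : A → ℝ) :
    pairA A (∑ j, κ j • w j) y = ∑ j, κ j * pairA A (w j) y := by
  calc pairA A (∑ j, κ j • w j) y
      = ∑ α : A, ∑ j, κ j * (w j α * y α) := by
        refine Finset.sum_congr rfl fun α _ => ?_
        simp [Finset.sum_apply, Finset.sum_mul, mul_assoc]
    _ = ∑ j, κ j * pairA A (w j) y := by
        rw [Finset.sum_comm]
        simp [pairA, Finset.mul_sum]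

lemma evalA_eq_pairA (p : A → ℝ) (u : Fin n → ℝ) :
    evalA A p u = pairA A p (fun α => monoEval (α : Exp n) u) := rfl

lemma monoEval_continuous (α : Exp n) : Continuous fun u : Fin n → ℝ => monoEval α u := by
  unfold monoEval
  exact continuous_finset_prod _ fun i _ => (continuous_apply i).pow _

lemma atomic_mem_RAcone {K : Set (Fin n → ℝ)} (hK : IsClosed K) {N : ℕ}
    (t : Fin N → ℝ) (pts : Fin N → Fin n → ℝ) (ht : ∀ j, 0 ≤ t j) (hpts : ∀ j, pts j ∈ K) :
    (fun α : A => ∑ j, t j * monoEval (α : Exp n) (pts j)) ∈ RAcone A K := by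
  classical
  have hint : ∀ (α : Exp n) (j : Fin N),
      Integrable (monoEval α) ((ENNReal.ofReal (t j)) • Measure.dirac (pts j)) := by
    intro α j
    refine Integrable.smul_measure ?_ ENNReal.ofReal_ne_top
    refine ⟨(monoEval_continuous α).stronglyMeasurable.aestronglyMeasurable, ?_⟩
    unfold HasFiniteIntegral
    rw [lintegral_dirac]
    exact ENNReal.coe_lt_top
  refine ⟨∑ j, (ENNReal.ofReal (t j)) • Measure.dirac (pts j), ?_, fun α => ⟨?_, ?_⟩⟩
  · rw [Measure.finset_sum_apply]
    refine Finset.sum_eq_zero fun j _ => ?_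
    rw [Measure.smul_apply, Measure.dirac_apply' _ hK.measurableSet.compl]
    simp [Set.indicator, hpts j]
  · exact integrable_finset_sum_measure.2 fun j _ => hint _ j
  · rw [integral_finset_sum_measure (fun j _ => hint _ j)]
    refine Finset.sum_congr rfl fun j _ => ?_
    rw [integral_smul_measure, integral_dirac, ENNReal.toReal_ofReal (ht j), smul_eq_mul]

lemma exists_sep {F : Type*} [NormedAddCommGroup F] [NormedSpace ℝ F] [FiniteDimensional ℝ F]
    {U : Set F} (hU : Convex ℝ U) (hne : U.Nonempty) (h0 : (0:F) ∉ U)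
    (hscale : ∀ x ∈ U, ∀ l : ℝ, 0 < l → l • x ∈ U) :
    ∃ f : F →L[ℝ] ℝ, f ≠ 0 ∧ ∀ x ∈ U, 0 ≤ f x := by
  have hz : ∃ z : F, z ∉ closure U := by
    by_contra hcon
    push_neg at hcon
    have haff : affineSpan ℝ U = ⊤ := by
      rw [eq_top_iff]
      intro x _
      exact closure_minimal (subset_affineSpan ℝ U)
        (affineSpan ℝ U).closed_of_finiteDimensional (hcon x)
    obtain ⟨z, hzint⟩ := hU.interior_nonempty_iff_affineSpan_eq_top.2 haff
    obtain ⟨ρ, hρpos, hball⟩ := Metric.isOpen_iff.1 isOpen_interior z hzint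
    obtain ⟨y, hyU, hynear⟩ := Metric.mem_closure_iff.1 (hcon (-z)) ρ hρpos
    have hxU : (-y) ∈ U := by
      refine interior_subset (hball ?_)
      rw [Metric.mem_ball, dist_eq_norm]
      rw [dist_eq_norm] at hynear
      have he : -y - z = -z - y := by abel
      rw [he]
      exact hynear
    have h2 : (0:F) ∈ U := by
      have h := hU hyU hxU (le_of_lt one_half_pos) (le_of_lt one_half_pos) (by norm_num)
      have he : (1/2 : ℝ) • y + (1/2 : ℝ) • (-y) = 0 := by
        rw [smul_neg]; exact add_neg_cancel _
      rwa [he] at h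
    exact h0 h2
  obtain ⟨z, hz⟩ := hz
  obtain ⟨f, β, hfz, hfU⟩ := geometric_hahn_banach_point_closed hU.closure isClosed_closure hz
  obtain ⟨x₀, hx₀⟩ := hne
  have hβ : β ≤ 0 := by
    by_contra hβ
    push_neg at hβ
    rcases le_or_gt (f x₀) 0 with h | h
    · have := hfU x₀ (subset_closure hx₀); linarith
    · have hx' := hscale x₀ hx₀ (β / (2 * f x₀)) (by positivity)
      have h2 := hfU _ (subset_closure hx')
      rw [_root_.map_smul, smul_eq_mul] at h2
      have h3 : β / (2 * f x₀) * f x₀ = β / 2 := by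
        field_simp
      linarith
  refine ⟨f, ?_, fun x hx => ?_⟩
  · intro h
    rw [h] at hfz
    simp at hfz
    linarith
  · by_contra hneg
    push_neg at hneg
    have hl : 0 < (β - 1) / f x := div_pos_of_neg_of_neg (by linarith) hneg
    have h2 := hfU _ (subset_closure (hscale x hx _ hl))
    rw [_root_.map_smul, smul_eq_mul] at h2
    have heq : (β - 1) / f x * f x = β - 1 := div_mul_cancel₀ _ (ne_of_lt hneg)
    rw [heq] at h2
    linarith

end Stmt16

/-- If no nonzero `a ∈ span{a_1,…,a_m}` is nonnegative on the
nonempty compact set `K` and (4.2) is infeasible, then there is `y ∈ R_A(K)` with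
`⟨c, y⟩ < 0` and `⟨a_i, y⟩ = 0` for all `i`. -/
theorem statement_16 {n m : ℕ} (hn : 1 ≤ n) {A : Finset (Exp n)} (hA : A.Nonempty)
    {K : Set (Fin n → ℝ)} (hKne : K.Nonempty) (hKcpt : IsCompact K)
    (c : A → ℝ) (a : Fin m → (A → ℝ))
    (hspan : ∀ μ : Fin m → ℝ, (∀ u ∈ K, 0 ≤ evalA A (∑ i, μ i • a i) u) →
      (∑ i, μ i • a i) = 0)
    (hinf : ¬ ∃ lam : Fin m → ℝ, cLam c a lam ∈ PAcone A K) :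
    ∃ y ∈ RAcone A K, pairA A c y < 0 ∧ ∀ i, pairA A (a i) y = 0 := by
  classical
  by_contra hgoal
  push_neg at hgoal
  set V : Submodule ℝ (↥A → ℝ) := Submodule.span ℝ (Set.range a) with hV
  let b : Module.Basis (Fin (Module.finrank ℝ V)) ℝ V := Module.finBasis ℝ V
  set r := Module.finrank ℝ V with hr
  let v : Fin r → (↥A → ℝ) := fun j => (b j : ↥A → ℝ)
  have hvV : ∀ j, v j ∈ V := fun j => (b j).2
  have hv_span : ∀ w : ↥A → ℝ, w ∈ V → ∃ κ : Fin r → ℝ, ∑ j, κ j • v j = w := by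
    intro w hw
    have hmem : (⟨w, hw⟩ : V) ∈ Submodule.span ℝ (Set.range b) := by
      rw [b.span_eq]; trivial
    obtain ⟨κ, hκ⟩ := (Submodule.mem_span_range_iff_exists_fun ℝ).1 hmem
    refine ⟨κ, ?_⟩
    have h2 := congrArg (Submodule.subtype V) hκ
    simpa [v] using h2
  have hv_indep : ∀ κ : Fin r → ℝ, ∑ j, κ j • v j = 0 → κ = 0 := by
    intro κ hκ
    have h1 : ((∑ j, κ j • b j : V) : ↥A → ℝ) = ∑ j, κ j • v j := by simp [v]
    have h2 : (∑ j, κ j • b j : V) = 0 := by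
      apply Subtype.ext
      rw [h1, hκ]; rfl
    exact funext fun j => Fintype.linearIndependent_iff.1 b.linearIndependent κ h2 j
  have ha_mem : ∀ i, a i ∈ V := fun i => Submodule.subset_span ⟨i, rfl⟩
  -- the cone of moment vectors of finitely-atomic measures on K
  set C : Set (↥A → ℝ) := {y | ∃ (N : ℕ) (t : Fin N → ℝ) (pts : Fin N → (Fin n → ℝ)),
      (∀ j, 0 ≤ t j) ∧ (∀ j, pts j ∈ K) ∧
      y = fun α : ↥A => ∑ j, t j * monoEval (α : Exp n) (pts j)} with hC
  have hC0 : (0 : ↥A → ℝ) ∈ C :=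
    ⟨0, Fin.elim0, Fin.elim0, fun j => j.elim0, fun j => j.elim0, by funext α; simp⟩
  have hCe : ∀ u ∈ K, (fun α : ↥A => monoEval (α : Exp n) u) ∈ C := by
    intro u hu
    exact ⟨1, fun _ => 1, fun _ => u, fun _ => zero_le_one, fun _ => hu, by funext α; simp⟩
  have hCadd : ∀ y₁ ∈ C, ∀ y₂ ∈ C, y₁ + y₂ ∈ C := by
    rintro y₁ ⟨N₁, t₁, p₁, ht₁, hp₁, rfl⟩ y₂ ⟨N₂, t₂, p₂, ht₂, hp₂, rfl⟩
    refine ⟨N₁ + N₂, Fin.append t₁ t₂, Fin.append p₁ p₂, ?_, ?_, ?_⟩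
    · intro j
      refine Fin.addCases (fun i => ?_) (fun i => ?_) j
      · rw [Fin.append_left]; exact ht₁ i
      · rw [Fin.append_right]; exact ht₂ i
    · intro j
      refine Fin.addCases (fun i => ?_) (fun i => ?_) j
      · rw [Fin.append_left]; exact hp₁ i
      · rw [Fin.append_right]; exact hp₂ i
    · funext α
      simp [Fin.sum_univ_add, Fin.append_left, Fin.append_right]
  have hCsmul : ∀ l : ℝ, 0 ≤ l → ∀ y ∈ C, l • y ∈ C := by
    rintro l hl y ⟨N, t, p, ht, hp, rfl⟩
    refine ⟨N, fun j => l * t j, p, fun j => mul_nonneg hl (ht j), hp, ?_⟩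
    funext α
    simp [Finset.mul_sum, mul_assoc]
  have hC_RA : ∀ y ∈ C, y ∈ RAcone A K := by
    rintro y ⟨N, t, p, ht, hp, rfl⟩
    exact Stmt16.atomic_mem_RAcone hKcpt.isClosed t p ht hp
  have hcge : ∀ y ∈ C, (∀ j, pairA A (v j) y = 0) → 0 ≤ pairA A c y := by
    intro y hy hperp
    have hai : ∀ i, pairA A (a i) y = 0 := by
      intro i
      obtain ⟨κ, hκ⟩ := hv_span (a i) (ha_mem i)
      rw [← hκ, Stmt16.pairA_sum_smul_left]
      simp [hperp]
    by_contra hlt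
    push_neg at hlt
    obtain ⟨i, hi⟩ := hgoal y (hC_RA y hy) hlt
    exact hi (hai i)
  -- the image cone in (Fin r → ℝ) × ℝ
  set U : Set ((Fin r → ℝ) × ℝ) := {x | ∃ y ∈ C, ∃ t : ℝ, 0 < t ∧
      x = (fun j => pairA A (v j) y, pairA A c y + t)} with hU
  have hUne : U.Nonempty := ⟨_, 0, hC0, 1, one_pos, rfl⟩
  have hUconv : Convex ℝ U := by
    rintro x₁ ⟨y₁, hy₁, t₁, ht₁, rfl⟩ x₂ ⟨y₂, hy₂, t₂, ht₂, rfl⟩ θ₁ θ₂ hθ₁ hθ₂ hθ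
    refine ⟨θ₁ • y₁ + θ₂ • y₂,
      hCadd _ (hCsmul θ₁ hθ₁ _ hy₁) _ (hCsmul θ₂ hθ₂ _ hy₂), θ₁ * t₁ + θ₂ * t₂, ?_, ?_⟩
    · rcases eq_or_lt_of_le hθ₁ with h | h
      · have hθ₂' : θ₂ = 1 := by linarith
        rw [← h, hθ₂']; simpa using ht₂
      · have : 0 < θ₁ * t₁ := mul_pos h ht₁
        nlinarith [mul_nonneg hθ₂ ht₂.le]
    · rw [Prod.smul_mk, Prod.smul_mk, Prod.mk_add_mk, Prod.mk.injEq]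
      constructor
      · funext j
        simp only [Pi.add_apply, Pi.smul_apply, smul_eq_mul,
          Stmt16.pairA_add_right, Stmt16.pairA_smul_right]
      · simp only [smul_eq_mul, Stmt16.pairA_add_right, Stmt16.pairA_smul_right]
        ring
  have hU0 : (0 : (Fin r → ℝ) × ℝ) ∉ U := by
    rintro ⟨y, hy, t, ht, hx⟩
    have h1 : ∀ j, pairA A (v j) y = 0 := fun j => (congrFun (congrArg Prod.fst hx) j).symm
    have h2 : pairA A c y + t = 0 := (congrArg Prod.snd hx).symm
    have h3 := hcge y hy h1
    linarith
  have hUscale : ∀ x ∈ U, ∀ l : ℝ, 0 < l → l • x ∈ U := by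
    rintro x ⟨y, hy, t, ht, rfl⟩ l hl
    refine ⟨l • y, hCsmul l hl.le _ hy, l * t, mul_pos hl ht, ?_⟩
    rw [Prod.smul_mk, Prod.mk.injEq]
    constructor
    · funext j
      simp [Stmt16.pairA_smul_right]
    · simp [Stmt16.pairA_smul_right]
      ring
  obtain ⟨f, hf0, hfpos⟩ := Stmt16.exists_sep hUconv hUne hU0 hUscale
  set ν : Fin r → ℝ := fun j => f (fun k => if j = k then (1:ℝ) else 0, 0) with hν
  set t₀ : ℝ := f (0, 1) with ht₀def
  have hdecomp : ∀ (w : Fin r → ℝ) (s : ℝ), f (w, s) = (∑ j, ν j * w j) + t₀ * s := by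
    intro w s
    have hsplit : ((w, s) : (Fin r → ℝ) × ℝ) = (w, 0) + s • ((0, 1) : (Fin r → ℝ) × ℝ) := by
      rw [Prod.smul_mk, Prod.mk_add_mk]
      simp
    have hw0 : ((w, (0:ℝ)) : (Fin r → ℝ) × ℝ)
        = ∑ j, w j • (((fun k => if j = k then (1:ℝ) else 0), 0) : (Fin r → ℝ) × ℝ) := by
      rw [Prod.ext_iff]
      constructor
      · rw [Prod.fst_sum]
        simp only [Prod.smul_mk]
        exact pi_eq_sum_univ w
      · rw [Prod.snd_sum]
        simp
    rw [hsplit, map_add, hw0, map_sum, _root_.map_smul, smul_eq_mul]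
    congr 1
    · refine Finset.sum_congr rfl fun j _ => ?_
      rw [_root_.map_smul, smul_eq_mul, mul_comm]
    · rw [mul_comm]
  have hkey : ∀ y ∈ C, ∀ t : ℝ, 0 < t →
      0 ≤ (∑ j, ν j * pairA A (v j) y) + t₀ * (pairA A c y + t) := by
    intro y hy t ht
    have h := hfpos _ ⟨y, hy, t, ht, rfl⟩
    rwa [hdecomp] at h
  have ht₀ : 0 ≤ t₀ := by
    have h := hkey 0 hC0 1 one_pos
    simpa [Stmt16.pairA_zero_right] using h
  have hkey0 : ∀ y ∈ C, 0 ≤ (∑ j, ν j * pairA A (v j) y) + t₀ * pairA A c y := by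
    intro y hy
    by_contra hS
    push_neg at hS
    set S : ℝ := (∑ j, ν j * pairA A (v j) y) + t₀ * pairA A c y with hSdef
    set t : ℝ := -S / (t₀ + 1) with htdef
    have htden : (0:ℝ) < t₀ + 1 := by linarith
    have htpos : 0 < t := div_pos (by linarith) htden
    have h2 := hkey y hy t htpos
    have hmul : t * (t₀ + 1) = -S := div_mul_cancel₀ _ (ne_of_gt htden)
    have h3 : t₀ * t = -S - t := by linear_combination hmul
    have h4 : (∑ j, ν j * pairA A (v j) y) + t₀ * (pairA A c y + t) = S + t₀ * t := by
      rw [hSdef]; ring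
    rw [h4, h3] at h2
    linarith
  rcases eq_or_lt_of_le ht₀ with ht0 | ht0
  · -- degenerate case: t₀ = 0 forces f = 0
    have hw : ∀ y ∈ C, 0 ≤ pairA A (∑ j, ν j • v j) y := by
      intro y hy
      rw [Stmt16.pairA_sum_smul_left]
      have h := hkey0 y hy
      rw [← ht0] at h
      simpa using h
    have hwV : (∑ j, ν j • v j) ∈ V :=
      Submodule.sum_mem _ fun j _ => Submodule.smul_mem _ _ (hvV j)
    rw [hV] at hwV
    obtain ⟨μ, hμ⟩ := (Submodule.mem_span_range_iff_exists_fun ℝ).1 hwV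
    have hzero : ∑ i, μ i • a i = 0 := by
      refine hspan μ ?_
      intro u hu
      rw [hμ, Stmt16.evalA_eq_pairA]
      exact hw _ (hCe u hu)
    have hwzero : ∑ j, ν j • v j = 0 := by rw [← hμ, hzero]
    have hν0 : ν = 0 := hv_indep ν hwzero
    refine hf0 (ContinuousLinearMap.ext fun x => ?_)
    have hx : f x = f (x.1, x.2) := rfl
    rw [hx, hdecomp, ← ht0]
    simp [hν0]
  · -- main case: build λ contradicting hinf
    set w' : ↥A → ℝ := ∑ j, (ν j / t₀) • v j with hw'def
    have hq : ∀ u ∈ K, 0 ≤ evalA A (c + w') u := by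
      intro u hu
      rw [Stmt16.evalA_eq_pairA, Stmt16.pairA_add_left, hw'def, Stmt16.pairA_sum_smul_left]
      have h := hkey0 _ (hCe u hu)
      have hsum : ∑ j, ν j / t₀ * pairA A (v j) (fun α : ↥A => monoEval (α : Exp n) u)
          = (∑ j, ν j * pairA A (v j) (fun α : ↥A => monoEval (α : Exp n) u)) / t₀ := by
        rw [Finset.sum_div]
        exact Finset.sum_congr rfl fun j _ => div_mul_eq_mul_div _ _ _
      rw [hsum]
      have h2 : 0 ≤ (∑ j, ν j * pairA A (v j) (fun α : ↥A => monoEval (α : Exp n) u)) / t₀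
          + pairA A c (fun α : ↥A => monoEval (α : Exp n) u) := by
        have h3 := div_nonneg h (le_of_lt ht0)
        rwa [add_div, mul_div_cancel_left₀ _ (ne_of_gt ht0)] at h3
      linarith
    have hw'V : w' ∈ V :=
      Submodule.sum_mem _ fun j _ => Submodule.smul_mem _ _ (hvV j)
    rw [hV] at hw'V
    obtain ⟨κ, hκ⟩ := (Submodule.mem_span_range_iff_exists_fun ℝ).1 hw'V
    refine hinf ⟨fun i => -κ i, ?_⟩
    have hcl : cLam c a (fun i => -κ i) = c + w' := by
      unfold cLam
      rw [← hκ]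
      funext α
      simp [neg_smul, Finset.sum_neg_distrib]
    intro u hu
    rw [hcl]
    exact hq u hu

end
end

section
/- Let K ⊆ ℝ^n be a nonempty compact set, let A ⊆ ℕ^n be finite, and let c, a_1, …, a_m ∈ ℝ[x]_A. Suppose there is no nonzero a ∈ span{a_1,…,a_m} with a ≥ 0 on K. Then the intersection of P_A(K) with the affine subspace c + span{a_1,…,a_m} is bounded: there exists T > 0 such that every p ∈ P_A(K) of the form p = c − λ_1 a_1 − ⋯ − λ_m a_m (λ ∈ ℝ^m) satisfies ‖p‖₂ ≤ T, where ‖p‖₂ is the Euclidean norm of the coefficient vector of p. -/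
open MeasureTheory MvPolynomial Finset

noncomputable section

/-- `evalA` as a linear map in the coefficient vector. -/
def evalAL {n : ℕ} (A : Finset (Exp n)) (u : Fin n → ℝ) : (A → ℝ) →ₗ[ℝ] ℝ where
  toFun p := evalA A p u
  map_add' p q := by
    simp [evalA, add_mul, Finset.sum_add_distrib]
  map_smul' r p := by
    simp [evalA, Finset.mul_sum, mul_assoc]

/-- If no nonzero `a ∈ span{a_1,…,a_m}` is nonnegative on the
nonempty compact set `K`, then `P_A(K) ∩ (c + span{a_1,…,a_m})` is bounded. -/
theorem statement_17 {n m : ℕ} (hn : 1 ≤ n) {A : Finset (Exp n)} (hA : A.Nonempty)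
    {K : Set (Fin n → ℝ)} (hKne : K.Nonempty) (hKcpt : IsCompact K)
    (c : A → ℝ) (a : Fin m → (A → ℝ))
    (hspan : ∀ μ : Fin m → ℝ, (∀ u ∈ K, 0 ≤ evalA A (∑ i, μ i • a i) u) →
      (∑ i, μ i • a i) = 0) :
    ∃ T : ℝ, 0 < T ∧ ∀ lam : Fin m → ℝ, cLam c a lam ∈ PAcone A K →
      Real.sqrt (∑ α : A, (cLam c a lam α) ^ 2) ≤ T := by
  classical
  set V : Submodule ℝ (↥A → ℝ) := Submodule.span ℝ (Set.range a) with hV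
  set D : Set (↥A → ℝ) := {v | v ∈ V ∧ (c - v) ∈ PAcone A K} with hD
  -- Step 1: D is bounded
  have hDb : Bornology.IsBounded D := by
    by_contra hb
    have h1 : ∀ k : ℕ, ∃ v, v ∈ D ∧ (k : ℝ) < ‖v‖ := by
      intro k
      by_contra h
      push_neg at h
      exact hb ((Metric.isBounded_closedBall (x := (0 : ↥A → ℝ)) (r := (k : ℝ))).subset
        (fun v hv => by simpa [Metric.mem_closedBall, dist_eq_norm] using h v hv))
    choose v hvD hvnorm using h1
    have hvpos : ∀ k : ℕ, (0 : ℝ) < ‖v k‖ := by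
      intro k
      exact lt_of_le_of_lt (Nat.cast_nonneg k) (hvnorm k)
    set w : ℕ → (↥A → ℝ) := fun k => ‖v k‖⁻¹ • v k with hw
    have hwsph : ∀ k, w k ∈ Metric.sphere (0 : ↥A → ℝ) 1 := by
      intro k
      simp only [Metric.mem_sphere, dist_zero_right, hw, norm_smul, norm_inv, norm_norm]
      exact inv_mul_cancel₀ (ne_of_gt (hvpos k))
    obtain ⟨w0, hw0sph, φ, hφmono, hφlim⟩ :=
      (isCompact_sphere (0 : ↥A → ℝ) 1).tendsto_subseq hwsph
    -- w0 ∈ V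
    have hwV : ∀ k, w k ∈ V := fun k => Submodule.smul_mem V _ (hvD k).1
    have hw0V : w0 ∈ V := by
      have hcl : IsClosed (V : Set (↥A → ℝ)) := Submodule.closed_of_finiteDimensional V
      exact hcl.mem_of_tendsto hφlim (Filter.Eventually.of_forall fun k => hwV (φ k))
    -- evalA of w0 is ≤ 0 on K
    have hnorm_tendsto : Filter.Tendsto (fun k => ‖v (φ k)‖⁻¹) Filter.atTop (nhds 0) := by
      apply Filter.Tendsto.comp tendsto_inv_atTop_zero
      have hφge : ∀ k : ℕ, (k : ℝ) ≤ ‖v (φ k)‖ := fun k =>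
        le_trans (Nat.cast_le.2 (hφmono.id_le k)) (le_of_lt (hvnorm (φ k)))
      exact Filter.tendsto_atTop_mono hφge tendsto_natCast_atTop_atTop
    have hw0le : ∀ u ∈ K, evalA A w0 u ≤ 0 := by
      intro u hu
      have hcont : Continuous fun p : ↥A → ℝ => evalAL A u p :=
        (evalAL A u).continuous_of_finiteDimensional
      have hEtend : Filter.Tendsto (fun k => evalAL A u (w (φ k))) Filter.atTop
          (nhds (evalAL A u w0)) := (hcont.tendsto w0).comp hφlim
      have hupper : ∀ k, evalAL A u (w (φ k)) ≤ ‖v (φ k)‖⁻¹ * evalAL A u c := by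
        intro k
        have hP : 0 ≤ evalA A (c - v (φ k)) u := (hvD (φ k)).2 u hu
        have : evalAL A u (v (φ k)) ≤ evalAL A u c := by
          have := (evalAL A u).map_sub c (v (φ k))
          have h0 : 0 ≤ evalAL A u c - evalAL A u (v (φ k)) := by
            rw [← this]; exact hP
          linarith
        have hEw : evalAL A u (w (φ k)) = ‖v (φ k)‖⁻¹ * evalAL A u (v (φ k)) := by
          simp [hw, _root_.map_smul, smul_eq_mul]
        rw [hEw]
        exact mul_le_mul_of_nonneg_left this (inv_nonneg.2 (norm_nonneg _))
      have hlim0 : Filter.Tendsto (fun k => ‖v (φ k)‖⁻¹ * evalAL A u c) Filter.atTop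
          (nhds 0) := by
        simpa using hnorm_tendsto.mul_const (evalAL A u c)
      exact le_of_tendsto_of_tendsto hEtend hlim0 (Filter.Eventually.of_forall hupper)
    -- w0 = 0 via hspan, contradiction with ‖w0‖ = 1
    obtain ⟨μ, hμ⟩ := (Finsupp.mem_span_range_iff_exists_finsupp).1 hw0V
    set μf : Fin m → ℝ := fun i => -μ i with hμf
    have hsum : (∑ i, μf i • a i) = -w0 := by
      rw [← hμ]
      rw [Finsupp.sum_fintype _ _ (by intro i; simp)]
      simp [hμf, neg_smul, Finset.sum_neg_distrib]
    have hzero : (∑ i, μf i • a i) = 0 := by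
      apply hspan
      intro u hu
      rw [hsum]
      have : evalA A (-w0) u = -(evalA A w0 u) := by
        have := (evalAL A u).map_neg w0
        exact this
      rw [this]
      linarith [hw0le u hu]
    rw [hsum] at hzero
    have : w0 = 0 := by simpa using hzero
    rw [this] at hw0sph
    simp at hw0sph
  -- Step 2: extract a bound
  obtain ⟨R, hR⟩ := hDb.subset_closedBall 0
  set R' : ℝ := max R 0 with hR'
  set T : ℝ := Real.sqrt (A.card) * (‖c‖ + R') + 1 with hT
  refine ⟨T, ?_, ?_⟩
  · have h1 : 0 ≤ Real.sqrt (A.card) * (‖c‖ + R') := by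
      apply mul_nonneg (Real.sqrt_nonneg _)
      have : (0:ℝ) ≤ R' := le_max_right R 0
      positivity
    linarith
  · intro lam hlam
    set vv : ↥A → ℝ := ∑ i, lam i • a i with hvv
    have hvvV : vv ∈ V := by
      apply Submodule.sum_mem
      intro i _
      exact Submodule.smul_mem V _ (Submodule.subset_span ⟨i, rfl⟩)
    have hclam : cLam c a lam = c - vv := rfl
    have hvvD : vv ∈ D := ⟨hvvV, by rw [← hclam]; exact hlam⟩
    have hvvnorm : ‖vv‖ ≤ R' := by
      have := hR hvvD
      simp only [Metric.mem_closedBall, dist_zero_right] at this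
      exact this.trans (le_max_left R 0)
    have hcv : ‖c - vv‖ ≤ ‖c‖ + R' := (norm_sub_le c vv).trans (by linarith)
    have hsq : ∀ α : ↥A, (cLam c a lam α) ^ 2 ≤ (‖c‖ + R') ^ 2 := by
      intro α
      have h1 : |cLam c a lam α| ≤ ‖c - vv‖ := by
        rw [hclam]
        simpa using norm_le_pi_norm (c - vv) α
      have h2 : |cLam c a lam α| ≤ ‖c‖ + R' := h1.trans hcv
      calc (cLam c a lam α) ^ 2 = |cLam c a lam α| ^ 2 := (sq_abs _).symm
        _ ≤ (‖c‖ + R') ^ 2 := by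
            apply pow_le_pow_left₀ (abs_nonneg _) h2
    have hsum : (∑ α : ↥A, (cLam c a lam α) ^ 2) ≤ (A.card : ℝ) * (‖c‖ + R') ^ 2 := by
      calc (∑ α : ↥A, (cLam c a lam α) ^ 2) ≤ ∑ _α : ↥A, (‖c‖ + R') ^ 2 :=
            Finset.sum_le_sum fun α _ => hsq α
        _ = (A.card : ℝ) * (‖c‖ + R') ^ 2 := by
            rw [Finset.sum_const, nsmul_eq_mul]
            congr 1
            simp [Fintype.card_coe]
    have hcR : (0:ℝ) ≤ ‖c‖ + R' := by
      have : (0:ℝ) ≤ R' := le_max_right R 0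
      positivity
    calc Real.sqrt (∑ α : ↥A, (cLam c a lam α) ^ 2)
        ≤ Real.sqrt ((A.card : ℝ) * (‖c‖ + R') ^ 2) := Real.sqrt_le_sqrt hsum
      _ = Real.sqrt (A.card) * (‖c‖ + R') := by
          rw [Real.sqrt_mul (Nat.cast_nonneg _), Real.sqrt_sq hcR]
      _ ≤ T := by rw [hT]; linarith

end
end

section
/- Let K be the semialgebraic set defined by h and g, and suppose ρ − (x_1² + ⋯ + x_n²) ∈ I_{2k₁}(h) + Q_{k₁}(g) for some ρ > 0 and k₁ ∈ ℕ. Then for every k ≥ k₁, every w ∈ Φ_k(g) ∩ E_k(h), and every t ∈ {0, 1, …, k − k₁}, the Riesz functional satisfies L_w((x_1² + ⋯ + x_n²)^t) ≤ ρ^t · w_0, where w_0 is the entry of w indexed by the zero exponent. -/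
open MeasureTheory MvPolynomial Finset

noncomputable section

namespace SosAux

variable {n : ℕ}

def degF {n : ℕ} (d : Fin n →₀ ℕ) : ℕ := d.sum fun _ e => e

lemma degF_add (a b : Fin n →₀ ℕ) : degF (a + b) = degF a + degF b :=
  Finsupp.sum_add_index' (fun _ => rfl) (fun _ _ _ => rfl)

lemma riesz_eq_sum_of_subset (w : Exp n → ℝ) {p : MvPolynomial (Fin n) ℝ}
    {S : Finset (Fin n →₀ ℕ)} (h : p.support ⊆ S) :
    riesz w p = ∑ d ∈ S, coeff d p * w (d : Fin n → ℕ) := by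
  rw [riesz]
  refine Finset.sum_subset h ?_
  intro d _ hd
  simp [MvPolynomial.notMem_support_iff.mp hd]

lemma riesz_zero (w : Exp n → ℝ) : riesz w (0 : MvPolynomial (Fin n) ℝ) = 0 := by
  simp [riesz]

lemma riesz_add (w : Exp n → ℝ) (p q : MvPolynomial (Fin n) ℝ) :
    riesz w (p + q) = riesz w p + riesz w q := by
  rw [riesz_eq_sum_of_subset w (S := p.support ∪ q.support) (MvPolynomial.support_add),
    riesz_eq_sum_of_subset w (S := p.support ∪ q.support) Finset.subset_union_left,
    riesz_eq_sum_of_subset w (S := p.support ∪ q.support) Finset.subset_union_right,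
    ← Finset.sum_add_distrib]
  refine Finset.sum_congr rfl fun d _ => ?_
  rw [MvPolynomial.coeff_add, add_mul]

lemma riesz_smul (w : Exp n → ℝ) (c : ℝ) (p : MvPolynomial (Fin n) ℝ) :
    riesz w (c • p) = c * riesz w p := by
  rw [riesz_eq_sum_of_subset w (S := p.support) (MvPolynomial.support_smul),
    riesz_eq_sum_of_subset w (S := p.support) Finset.Subset.rfl, Finset.mul_sum]
  refine Finset.sum_congr rfl fun d _ => ?_
  rw [MvPolynomial.coeff_smul, smul_eq_mul, mul_assoc]

lemma riesz_sub (w : Exp n → ℝ) (p q : MvPolynomial (Fin n) ℝ) :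
    riesz w (p - q) = riesz w p - riesz w q := by
  have := riesz_add w (p - q) q
  rw [sub_add_cancel] at this
  linarith

lemma riesz_sum (w : Exp n → ℝ) {ι : Type*} (S : Finset ι) (f : ι → MvPolynomial (Fin n) ℝ) :
    riesz w (∑ i ∈ S, f i) = ∑ i ∈ S, riesz w (f i) := by
  induction S using Finset.cons_induction with
  | empty => simp [riesz_zero]
  | cons a s ha ih => rw [Finset.sum_cons, riesz_add w, ih, Finset.sum_cons]

lemma riesz_one (w : Exp n → ℝ) : riesz w (1 : MvPolynomial (Fin n) ℝ) = w 0 := by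
  classical
  rw [riesz, show (1 : MvPolynomial (Fin n) ℝ) = monomial 0 1 from rfl, support_monomial]
  simp

lemma isSumSq_exists_list {σp : MvPolynomial (Fin n) ℝ} (h : IsSumSq σp) :
    ∃ l : List (MvPolynomial (Fin n) ℝ), σp = (l.map fun p => p * p).sum := by
  induction h with
  | zero => exact ⟨[], rfl⟩
  | sq_add a _ ih =>
    obtain ⟨l, hl⟩ := ih
    exact ⟨a :: l, by simp [hl]⟩

lemma exists_split (d : Fin n →₀ ℕ) :
    ∃ β γ : Fin n →₀ ℕ, β + γ = d ∧
      2 * degF β ≤ degF d + 1 ∧ 2 * degF γ ≤ degF d + 1 := by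
  suffices H : ∀ m : ℕ, ∀ d : Fin n →₀ ℕ, degF d ≤ m → ∃ β γ : Fin n →₀ ℕ,
      β + γ = d ∧ 2 * degF β ≤ degF d + 1 ∧ 2 * degF γ ≤ degF d + 1 from
    H (degF d) d le_rfl
  intro m
  induction m with
  | zero =>
    intro d hd
    have hz : ∀ i, d i = 0 := by
      intro i
      by_contra hne
      have hm : i ∈ d.support := Finsupp.mem_support_iff.mpr hne
      have : d i ≤ degF d := Finset.single_le_sum (f := fun j => d j) (fun _ _ => Nat.zero_le _) hm
      omega
    have hdz : d = 0 := Finsupp.ext hz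
    have hz0 : degF (0 : Fin n →₀ ℕ) = 0 := by simp [degF]
    exact ⟨0, 0, by simp [hdz], by omega, by omega⟩
  | succ m ih =>
    intro d hd
    by_cases h0 : d = 0
    · have hz0 : degF (0 : Fin n →₀ ℕ) = 0 := by simp [degF]
      have hz1 : degF d = 0 := by rw [h0, hz0]
      exact ⟨0, 0, by simp [h0], by omega, by omega⟩
    · obtain ⟨i, hi⟩ : ∃ i, d i ≠ 0 := by
        by_contra hc
        push_neg at hc
        exact h0 (Finsupp.ext hc)
      set d' : Fin n →₀ ℕ := d - Finsupp.single i 1 with hd'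
      have hdd : d' + Finsupp.single i 1 = d := by
        ext j
        simp only [Finsupp.add_apply, hd', Finsupp.tsub_apply, Finsupp.single_apply]
        by_cases hji : i = j
        · subst hji; simp; omega
        · simp [hji]
      have hdeg : degF d' + 1 = degF d := by
        have := degF_add d' (Finsupp.single i 1)
        rw [hdd] at this
        have h1 : degF (Finsupp.single i 1) = 1 := by
          simp [degF, Finsupp.sum_single_index]
        omega
      obtain ⟨β', γ', hbg, hb, hg⟩ := ih d' (by omega)
      rcases le_or_gt (degF β') (degF γ') with hle | hlt
      · refine ⟨β' + Finsupp.single i 1, γ', by rw [add_right_comm, hbg, hdd], ?_, ?_⟩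
        · rw [degF_add]
          have h1 : degF (Finsupp.single i 1) = 1 := by simp [degF, Finsupp.sum_single_index]
          have : degF β' + degF γ' = degF d' := by rw [← degF_add, hbg]
          omega
        · omega
      · refine ⟨β', γ' + Finsupp.single i 1, by rw [← add_assoc, hbg, hdd], ?_, ?_⟩
        · omega
        · rw [degF_add]
          have h1 : degF (Finsupp.single i 1) = 1 := by simp [degF, Finsupp.sum_single_index]
          have : degF β' + degF γ' = degF d' := by rw [← degF_add, hbg]
          omega

lemma coeff_listSum (d : Fin n →₀ ℕ) (l : List (MvPolynomial (Fin n) ℝ)) :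
    coeff d l.sum = (l.map fun p => coeff d p).sum := by
  induction l with
  | nil => simp
  | cons a t ih => simp [ih]

lemma foldr_union_mem (l : List (MvPolynomial (Fin n) ℝ)) (e : Fin n →₀ ℕ) :
    e ∈ l.foldr (fun p s => p.support ∪ s) ∅ ↔ ∃ p ∈ l, e ∈ p.support := by
  induction l with
  | nil => simp
  | cons a t ih => simp [ih]

lemma le_foldr_max (l : List (MvPolynomial (Fin n) ℝ)) :
    ∀ p ∈ l, p.totalDegree ≤ (l.map totalDegree).foldr max 0 := by
  induction l with
  | nil => simp
  | cons a t ih =>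
    intro p hp
    rcases List.mem_cons.mp hp with h | h
    · subst h; simp only [List.map_cons, List.foldr_cons]; exact le_max_left _ _
    · exact le_trans (ih p h)
        (by simp only [List.map_cons, List.foldr_cons]; exact le_max_right _ _)

lemma exists_foldr_max (l : List (MvPolynomial (Fin n) ℝ))
    (h : 0 < (l.map totalDegree).foldr max 0) :
    ∃ p ∈ l, p.totalDegree = (l.map totalDegree).foldr max 0 := by
  induction l with
  | nil => simp at h
  | cons a t ih =>
    simp only [List.map_cons, List.foldr_cons] at h ⊢
    rcases max_choice a.totalDegree ((t.map totalDegree).foldr max 0) with hm | hm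
    · exact ⟨a, List.mem_cons_self, hm.symm⟩
    · rw [hm] at h ⊢
      obtain ⟨p, hp, hpd⟩ := ih h
      exact ⟨p, List.mem_cons_of_mem _ hp, hpd⟩

lemma lex_cancel (u v b : Fin n →₀ ℕ) (hsum : u + v = b + b)
    (h1 : toLex u ≤ toLex b) (h2 : toLex v ≤ toLex b) : u = b := by
  by_contra hne
  have hlt : toLex u < toLex b := lt_of_le_of_ne h1 (fun h => hne (toLex.injective h))
  have hlt2 : toLex u + toLex v < toLex b + toLex b :=
    calc toLex u + toLex v ≤ toLex u + toLex b := add_le_add_right h2 _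
      _ = toLex b + toLex u := add_comm _ _
      _ < toLex b + toLex b := add_lt_add_right hlt _
  exact absurd (congrArg toLex hsum) (ne_of_lt hlt2)

lemma sumsq_deg (l : List (MvPolynomial (Fin n) ℝ)) :
    ∀ p ∈ l, 2 * p.totalDegree ≤ ((l.map (fun q => q * q)).sum).totalDegree := by
  set σ := (l.map (fun q => q * q)).sum with hσ
  set D := (l.map totalDegree).foldr max 0 with hDdef
  have hD : ∀ p ∈ l, p.totalDegree ≤ D := le_foldr_max l
  suffices h2D : 2 * D ≤ σ.totalDegree by
    intro p hp; exact le_trans (by have := hD p hp; omega) h2D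
  rcases Nat.eq_zero_or_pos D with hD0 | hDpos
  · omega
  have hexP : ∃ p ∈ l, p.totalDegree = D := exists_foldr_max l hDpos
  obtain ⟨ps, hpsl, hpsd⟩ := hexP
  have hpsne : ps.support.Nonempty := by
    rw [Finset.nonempty_iff_ne_empty]
    intro hc
    rw [MvPolynomial.support_eq_empty.mp hc] at hpsd
    simp [totalDegree_zero] at hpsd
    omega
  obtain ⟨ds, hds, hdsD⟩ : ∃ d ∈ ps.support, degF d = D := by
    obtain ⟨d, hd, hdeq⟩ := Finset.exists_mem_eq_sup ps.support hpsne
      (fun s => s.sum fun _ e => e)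
    exact ⟨d, hd, by rw [degF, ← hdeq, ← MvPolynomial.totalDegree, hpsd]⟩
  set S : Finset (Fin n →₀ ℕ) :=
    (l.foldr (fun (p : MvPolynomial (Fin n) ℝ) (s : Finset (Fin n →₀ ℕ)) => p.support ∪ s)
      ∅).filter (fun e => degF e = D) with hSdef
  have hmemS : ∀ e, e ∈ S ↔ (∃ p ∈ l, e ∈ p.support) ∧ degF e = D := by
    intro e; rw [hSdef, Finset.mem_filter, foldr_union_mem]
  have hSne : S.Nonempty := ⟨ds, (hmemS ds).mpr ⟨⟨ps, hpsl, hds⟩, hdsD⟩⟩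
  obtain ⟨β, hβS, hβmax⟩ := Finset.exists_max_image S (fun e => toLex e) hSne
  obtain ⟨⟨pβ, hpβl, hβsupp⟩, hβD⟩ := (hmemS β).mp hβS
  have hcoeff : ∀ p ∈ l, coeff (β + β) (p * p) = coeff β p * coeff β p := by
    intro p hp
    rw [MvPolynomial.coeff_mul]
    rw [Finset.sum_eq_single_of_mem (β, β) (Finset.HasAntidiagonal.mem_antidiagonal.mpr rfl)]
    intro b hb hne
    by_contra hc
    have h1 : coeff b.1 p ≠ 0 := fun h => hc (by rw [h, zero_mul])
    have h2 : coeff b.2 p ≠ 0 := fun h => hc (by rw [h, mul_zero])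
    have hb1 : b.1 ∈ p.support := MvPolynomial.mem_support_iff.mpr h1
    have hb2 : b.2 ∈ p.support := MvPolynomial.mem_support_iff.mpr h2
    have hsum : b.1 + b.2 = β + β := Finset.HasAntidiagonal.mem_antidiagonal.mp hb
    have hd1 : degF b.1 ≤ D := le_trans (MvPolynomial.le_totalDegree hb1) (hD p hp)
    have hd2 : degF b.2 ≤ D := le_trans (MvPolynomial.le_totalDegree hb2) (hD p hp)
    have hds2 : degF b.1 + degF b.2 = 2 * D := by
      have := degF_add b.1 b.2
      rw [hsum, degF_add, hβD] at this
      omega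
    have hd1' : degF b.1 = D := by omega
    have hd2' : degF b.2 = D := by omega
    have hS1 : b.1 ∈ S := (hmemS _).mpr ⟨⟨p, hp, hb1⟩, hd1'⟩
    have hS2 : b.2 ∈ S := (hmemS _).mpr ⟨⟨p, hp, hb2⟩, hd2'⟩
    have hle1 : toLex b.1 ≤ toLex β := hβmax _ hS1
    have hle2 : toLex b.2 ≤ toLex β := hβmax _ hS2
    have hb1β : b.1 = β := lex_cancel b.1 b.2 β hsum hle1 hle2
    have hb2β : b.2 = β := by
      rw [hb1β] at hsum
      exact add_left_cancel hsum
    exact hne (Prod.ext hb1β hb2β)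
  have hcoeffσ : coeff (β + β) σ = (l.map fun p => coeff β p * coeff β p).sum := by
    rw [hσ, coeff_listSum, List.map_map]
    congr 1
    exact List.map_congr_left fun p hp => hcoeff p hp
  have hpos : 0 < coeff (β + β) σ := by
    rw [hcoeffσ]
    have hbmem : coeff β pβ * coeff β pβ ∈ (l.map fun p => coeff β p * coeff β p) :=
      List.mem_map_of_mem hpβl
    have hnn : ∀ x ∈ (l.map fun p => coeff β p * coeff β p), (0:ℝ) ≤ x := by
      intro x hx
      obtain ⟨p, _, rfl⟩ := List.mem_map.mp hx
      exact mul_self_nonneg _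
    have h1 : coeff β pβ * coeff β pβ ≤ (l.map fun p => coeff β p * coeff β p).sum :=
      List.single_le_sum hnn _ hbmem
    have h2 : 0 < coeff β pβ * coeff β pβ := by
      have : coeff β pβ ≠ 0 := MvPolynomial.mem_support_iff.mp hβsupp
      exact mul_self_pos.mpr this
    linarith
  have hmem : (β + β) ∈ σ.support := MvPolynomial.mem_support_iff.mpr (ne_of_gt hpos)
  have h3 : degF (β + β) ≤ σ.totalDegree := MvPolynomial.le_totalDegree hmem
  rw [degF_add, hβD] at h3
  omega

/-- the polynomial `‖x‖²`. -/
def sP (n : ℕ) : MvPolynomial (Fin n) ℝ := ∑ i : Fin n, X i ^ 2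

lemma sP_deg : (sP n).totalDegree ≤ 2 := by
  refine le_trans (totalDegree_finset_sum _ _) ?_
  refine Finset.sup_le fun i _ => ?_
  refine le_trans (totalDegree_pow _ _) ?_
  rw [totalDegree_X]

lemma sq_mul_sP_succ (p : MvPolynomial (Fin n) ℝ) (t : ℕ) :
    p ^ 2 * sP n ^ (t + 1) = ∑ i : Fin n, ((p * X i) ^ 2 * sP n ^ t) := by
  have h1 : p ^ 2 * sP n = ∑ i : Fin n, (p * X i) ^ 2 := by
    rw [sP, Finset.mul_sum]
    exact Finset.sum_congr rfl fun i _ => by ring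
  calc p ^ 2 * sP n ^ (t + 1) = (p ^ 2 * sP n) * sP n ^ t := by ring
    _ = (∑ i : Fin n, (p * X i) ^ 2) * sP n ^ t := by rw [h1]
    _ = ∑ i : Fin n, ((p * X i) ^ 2 * sP n ^ t) := Finset.sum_mul _ _ _

lemma pos_G (w : Exp n → ℝ) (k : ℕ) (G : MvPolynomial (Fin n) ℝ)
    (hG : ∀ q : MvPolynomial (Fin n) ℝ, (G * q ^ 2).totalDegree ≤ 2 * k →
      0 ≤ riesz w (G * q ^ 2)) :
    ∀ t : ℕ, ∀ p : MvPolynomial (Fin n) ℝ,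
      G.totalDegree + 2 * p.totalDegree + 2 * t ≤ 2 * k →
      0 ≤ riesz w (G * (p ^ 2 * sP n ^ t)) := by
  intro t
  induction t with
  | zero =>
    intro p hp
    rw [pow_zero, mul_one]
    refine hG p (le_trans (totalDegree_mul _ _) ?_)
    have := totalDegree_pow p 2
    omega
  | succ t ih =>
    intro p hp
    rw [sq_mul_sP_succ, Finset.mul_sum, riesz_sum]
    refine Finset.sum_nonneg fun i _ => ?_
    refine ih (p * X i) ?_
    have h1 : (p * X i).totalDegree ≤ p.totalDegree + 1 := by
      have h2 := totalDegree_mul p (X i)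
      rw [totalDegree_X] at h2
      omega
    omega

lemma pos_list (w : Exp n → ℝ) (k : ℕ) (G : MvPolynomial (Fin n) ℝ)
    (hG : ∀ q : MvPolynomial (Fin n) ℝ, (G * q ^ 2).totalDegree ≤ 2 * k →
      0 ≤ riesz w (G * q ^ 2))
    (l : List (MvPolynomial (Fin n) ℝ)) (Dσ t : ℕ)
    (hl : ∀ p ∈ l, 2 * p.totalDegree ≤ Dσ)
    (hdeg : G.totalDegree + Dσ + 2 * t ≤ 2 * k) :
    0 ≤ riesz w (G * ((l.map fun p => p * p).sum * sP n ^ t)) := by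
  induction l with
  | nil => simp [riesz_zero]
  | cons a tl ih =>
    simp only [List.map_cons, List.sum_cons]
    rw [add_mul, mul_add, riesz_add]
    have h1 : 0 ≤ riesz w (G * (a * a * sP n ^ t)) := by
      rw [show a * a = a ^ 2 from (sq a).symm]
      refine pos_G w k G hG t a ?_
      have := hl a List.mem_cons_self
      omega
    have h2 := ih fun p hp => hl p (List.mem_cons_of_mem _ hp)
    linarith

lemma riesz_h_mono (w : Exp n → ℝ) (k : ℕ) (hp : MvPolynomial (Fin n) ℝ)
    (hE : ∀ p : MvPolynomial (Fin n) ℝ, (hp * p ^ 2).totalDegree ≤ 2 * k →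
      riesz w (hp * p ^ 2) = 0)
    (d : Fin n →₀ ℕ) (hd : hp.totalDegree + degF d + 1 ≤ 2 * k) :
    riesz w (hp * monomial d 1) = 0 := by
  obtain ⟨β, γ, hbg, hb, hg⟩ := exists_split d
  set a : MvPolynomial (Fin n) ℝ := monomial β 1 with hadef
  set b : MvPolynomial (Fin n) ℝ := monomial γ 1 with hbdef
  have hab : a * b = monomial d 1 := by
    rw [hadef, hbdef, monomial_mul, hbg, one_mul]
  have hdega : a.totalDegree = degF β := totalDegree_monomial β one_ne_zero
  have hdegb : b.totalDegree = degF γ := totalDegree_monomial γ one_ne_zero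
  have hsumd : (a + b).totalDegree ≤ max (degF β) (degF γ) := by
    rw [← hdega, ← hdegb]; exact totalDegree_add a b
  have hsubd : (a - b).totalDegree ≤ max (degF β) (degF γ) := by
    rw [← hdega, ← hdegb, sub_eq_add_neg]
    exact le_trans (totalDegree_add _ _) (by rw [totalDegree_neg])
  have hmax : 2 * max (degF β) (degF γ) ≤ degF d + 1 := by omega
  have hplus : riesz w (hp * (a + b) ^ 2) = 0 := by
    refine hE _ (le_trans (totalDegree_mul _ _) ?_)
    have := totalDegree_pow (a + b) 2
    omega
  have hminus : riesz w (hp * (a - b) ^ 2) = 0 := by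
    refine hE _ (le_trans (totalDegree_mul _ _) ?_)
    have := totalDegree_pow (a - b) 2
    omega
  have hid : hp * (a + b) ^ 2 - hp * (a - b) ^ 2 =
      hp * (a * b) + hp * (a * b) + hp * (a * b) + hp * (a * b) := by ring
  have h4 : riesz w (hp * (a + b) ^ 2) - riesz w (hp * (a - b) ^ 2) =
      4 * riesz w (hp * (a * b)) := by
    rw [← riesz_sub, hid, riesz_add, riesz_add, riesz_add]
    ring
  rw [← hab]
  rw [hplus, hminus] at h4
  linarith

lemma riesz_h_mul (w : Exp n → ℝ) (k : ℕ) (hp q : MvPolynomial (Fin n) ℝ)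
    (hE : ∀ p : MvPolynomial (Fin n) ℝ, (hp * p ^ 2).totalDegree ≤ 2 * k →
      riesz w (hp * p ^ 2) = 0)
    (hdq : hp.totalDegree + q.totalDegree + 1 ≤ 2 * k) :
    riesz w (hp * q) = 0 := by
  conv_lhs => rw [q.as_sum, Finset.mul_sum]
  rw [riesz_sum]
  refine Finset.sum_eq_zero fun d hd => ?_
  have hmono : monomial d (coeff d q) = (coeff d q) • (monomial d (1:ℝ)) := by
    rw [smul_monomial, smul_eq_mul, mul_one]
  rw [hmono, mul_smul_comm, riesz_smul]
  have hdd : degF d ≤ q.totalDegree := MvPolynomial.le_totalDegree hd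
  rw [riesz_h_mono w k hp hE d (by omega), mul_zero]

end SosAux

/-- If `ρ - ‖x‖² ∈ I_{2k₁}(h) + Q_{k₁}(g)` with `ρ > 0`, then for
all `k ≥ k₁`, `w ∈ Φ_k(g) ∩ E_k(h)` and `t ≤ k - k₁`, one has
`L_w(‖x‖^{2t}) ≤ ρ^t w_0`. -/
theorem statement_19 {n m1 m2 : ℕ} (hn : 1 ≤ n)
    (h : Fin m1 → MvPolynomial (Fin n) ℝ) (g : Fin m2 → MvPolynomial (Fin n) ℝ)
    (ρ : ℝ) (hρ : 0 < ρ) (k₁ : ℕ)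
    (hmem : (C ρ - ∑ i : Fin n, X i ^ 2) ∈ IQSet h g k₁)
    (k : ℕ) (hk : k₁ ≤ k) (w : Exp n → ℝ) (hw : w ∈ PhiSet g k ∩ ESet h k)
    (t : ℕ) (ht : t ≤ k - k₁) :
    riesz w ((∑ i : Fin n, X i ^ 2) ^ t) ≤ ρ ^ t * w 0 := by
  classical
  obtain ⟨⟨hΦ1, hΦ2⟩, hEw⟩ := hw
  have hS : (∑ i : Fin n, X i ^ 2 : MvPolynomial (Fin n) ℝ) = SosAux.sP n := rfl
  obtain ⟨a, ⟨q, hqdeg, haq⟩, b, ⟨σ₀, σ, hσ₀sq, hσ₀deg, hσprop, hbdef⟩, heq⟩ := hmem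
  rw [hS] at heq
  revert ht
  induction t with
  | zero =>
    intro _
    rw [pow_zero, pow_zero, one_mul, SosAux.riesz_one]
  | succ t ih =>
    intro ht
    have ht' : t ≤ k - k₁ := Nat.le_of_succ_le ht
    have hkk : k₁ + t + 1 ≤ k := by omega
    have IH := ih ht'
    rw [hS] at IH ⊢
    have hsplit : SosAux.sP n ^ (t + 1) =
        ρ • (SosAux.sP n ^ t) - (C ρ - SosAux.sP n) * SosAux.sP n ^ t := by
      rw [MvPolynomial.smul_eq_C_mul]; ring
    rw [hsplit, SosAux.riesz_sub, SosAux.riesz_smul]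
    have hsPt : (SosAux.sP n ^ t).totalDegree ≤ 2 * t := by
      have h1 := totalDegree_pow (SosAux.sP n) t
      have h2 : t * (SosAux.sP n).totalDegree ≤ t * 2 := Nat.mul_le_mul_left t SosAux.sP_deg
      omega
    have hA : riesz w (a * SosAux.sP n ^ t) = 0 := by
      rw [haq, Finset.sum_mul, SosAux.riesz_sum]
      refine Finset.sum_eq_zero fun i _ => ?_
      rcases hqdeg i with h0 | hdeg
      · rw [h0, mul_zero, zero_mul, SosAux.riesz_zero]
      · rw [mul_assoc]
        refine SosAux.riesz_h_mul w k (h i) (q i * SosAux.sP n ^ t) (hEw i) ?_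
        have hq1 : (q i * SosAux.sP n ^ t).totalDegree ≤ (q i).totalDegree + 2 * t := by
          refine le_trans (totalDegree_mul _ _) ?_
          omega
        omega
    have hB : 0 ≤ riesz w (b * SosAux.sP n ^ t) := by
      rw [hbdef, add_mul, Finset.sum_mul, SosAux.riesz_add, SosAux.riesz_sum]
      have hB0 : 0 ≤ riesz w (σ₀ * SosAux.sP n ^ t) := by
        obtain ⟨l, hl⟩ := SosAux.isSumSq_exists_list hσ₀sq
        have hG1 : ∀ qq : MvPolynomial (Fin n) ℝ,
            ((1 : MvPolynomial (Fin n) ℝ) * qq ^ 2).totalDegree ≤ 2 * k →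
            0 ≤ riesz w ((1 : MvPolynomial (Fin n) ℝ) * qq ^ 2) := by
          intro qq hq
          rw [one_mul] at hq ⊢
          exact hΦ1 qq hq
        have hble := SosAux.pos_list w k 1 hG1 l (2 * k₁) t
          (fun p hp => by
            have := SosAux.sumsq_deg l p hp
            rw [← hl] at this
            omega)
          (by rw [totalDegree_one]; omega)
        rw [one_mul, ← hl] at hble
        exact hble
      have hBj : ∀ j ∈ (Finset.univ : Finset (Fin m2)),
          0 ≤ riesz w (g j * σ j * SosAux.sP n ^ t) := by
        intro j _
        obtain ⟨hsqj, hcase⟩ := hσprop j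
        rcases hcase with h0 | hdegj
        · rw [h0, mul_zero, zero_mul, SosAux.riesz_zero]
        · obtain ⟨l, hl⟩ := SosAux.isSumSq_exists_list hsqj
          have hble := SosAux.pos_list w k (g j) (fun qq hq => hΦ2 j qq hq) l
            ((σ j).totalDegree) t
            (fun p hp => by
              have := SosAux.sumsq_deg l p hp
              rw [← hl] at this
              exact this)
            (by omega)
          rw [← hl] at hble
          rw [mul_assoc]
          exact hble
      exact add_nonneg hB0 (Finset.sum_nonneg hBj)
    have hCb : 0 ≤ riesz w ((C ρ - SosAux.sP n) * SosAux.sP n ^ t) := by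
      rw [heq, add_mul, SosAux.riesz_add]
      linarith
    have hmul : ρ * riesz w (SosAux.sP n ^ t) ≤ ρ * (ρ ^ t * w 0) :=
      mul_le_mul_of_nonneg_left IH (le_of_lt hρ)
    have hring : ρ * (ρ ^ t * w 0) = ρ ^ (t + 1) * w 0 := by ring
    linarith


end
end
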